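/- arXiv:1205.5660 — 5 statements merged into one kernel-verified Lean document; each statement's English description precedes it below -/
import Mathlib

section
/- Let X and Y be compact metric spaces and ε > 0. Then the set C_ε(X,Y) of continuous ε-maps from X to Y is an open subset of C(X,Y) with the uniform metric. -/
/-- For compact metric spaces `X` and `Y` and `ε > 0`, the set of continuous `ε`-maps
(maps `g` with `g x₁ = g x₂ → dist x₁ x₂ < ε`) is open in `C(X,Y)` with the uniform metric. -/
theorem epsilon_maps_isOpen {X Y : Type*}
    [MetricSpace X] [CompactSpace X] [MetricSpace Y] [CompactSpace Y]
    (ε : ℝ) (hε : 0 < ε) :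
    IsOpen {g : C(X, Y) | ∀ x₁ x₂ : X, g x₁ = g x₂ → dist x₁ x₂ < ε} := by
  rw [Metric.isOpen_iff]
  intro g hg
  set K : Set (X × X) := {p | ε ≤ dist p.1 p.2} with hK
  have hKc : IsCompact K := (isClosed_le continuous_const (by fun_prop)).isCompact
  rcases K.eq_empty_or_nonempty with hKe | hKne
  · refine ⟨1, one_pos, fun h _ x₁ x₂ _ => ?_⟩
    by_contra hlt
    push_neg at hlt
    exact (Set.eq_empty_iff_forall_notMem.1 hKe (x₁, x₂)) hlt
  · obtain ⟨p, hpK, hpmin'⟩ := hKc.exists_isMinOn hKne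
      ((by fun_prop : Continuous fun p : X × X => dist (g p.1) (g p.2)).continuousOn)
    have hpmin : ∀ q ∈ K, dist (g p.1) (g p.2) ≤ dist (g q.1) (g q.2) := fun q hq => hpmin' hq
    have hδ : 0 < dist (g p.1) (g p.2) := by
      rw [dist_pos]
      intro heq
      exact absurd (hg p.1 p.2 heq) (not_lt.2 hpK)
    refine ⟨dist (g p.1) (g p.2) / 2, by linarith, fun h hh x₁ x₂ hx => ?_⟩
    simp only [Metric.mem_ball] at hh
    by_contra hlt
    push_neg at hlt
    have h1 := hpmin (x₁, x₂) hlt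
    have h2 : dist (g x₁) (g x₂) ≤ dist (g x₁) (h x₁) + dist (h x₂) (g x₂) := by
      calc dist (g x₁) (g x₂) ≤ dist (g x₁) (h x₁) + dist (h x₁) (g x₂) := dist_triangle _ _ _
        _ = dist (g x₁) (h x₁) + dist (h x₂) (g x₂) := by rw [hx]
    have h3 : dist (g x₁) (h x₁) ≤ dist h g := by rw [dist_comm]; exact ContinuousMap.dist_apply_le_dist x₁
    have h4 : dist (h x₂) (g x₂) ≤ dist h g := ContinuousMap.dist_apply_le_dist x₂
    linarith
end

section
/- (Parameterized Brown theorem.) Let I and X be compact metric spaces, let {f_t}_{t∈I} be a near-isotopy of X, and let F : X×I → X×I, F(x,t) = (f_t(x),t), be the corresponding fat map. Then for every ε > 0 there exists a homeomorphism β : lim(X×I, F) → X×I such that: (a) β(ι_t(lim(X,f_t))) = X×{t} for every t ∈ I; and (b) sup_{z ∈ lim(X×I,F)} d(β(z), π₀(z)) < ε, where π₀ : lim(X×I,F) → X×I is projection to the 0-th coordinate. -/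
/-- The inverse limit `lim(X,f) = {x ∈ X^ℕ : f (x (i+1)) = x i}`. -/
def InvLim {X : Type*} (f : X → X) : Set (ℕ → X) :=
  {x | ∀ i, f (x (i + 1)) = x i}

/-- The embedding `ι_t : lim(X,f_t) → lim(X×I, F)`, `ι_t(x₀,x₁,…) = ((x₀,t),(x₁,t),…)`,
where `F(x,t) = (f (x,t), t)` is the fat map of the family `f`. -/
def iota {X I : Type*} (f : X × I → X) (t : I)
    (x : InvLim (fun x => f (x, t))) :
    InvLim (fun p : X × I => (f p, p.2)) :=
  ⟨fun i => (x.val i, t), fun i => congrArg (fun a => (a, t)) (x.property i)⟩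

section BrownAux
set_option linter.unusedSectionVars false
variable {Y T : Type*} [MetricSpace Y] [CompactSpace Y]

lemma pb_surj_of_near (F : Y → Y) (hF : Continuous F)
    (h : ∀ δ > (0:ℝ), ∃ G : Y ≃ₜ Y, ∀ p, dist (G p) (F p) < δ) :
    Function.Surjective F := by
  intro y
  have hcr : IsClosed (Set.range F) := (isCompact_range hF).isClosed
  have hy : y ∈ closure (Set.range F) := by
    rw [Metric.mem_closure_iff]
    intro δ hδ
    obtain ⟨G, hG⟩ := h δ hδ
    refine ⟨F (G.symm y), Set.mem_range_self _, ?_⟩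
    have := hG (G.symm y)
    rw [G.apply_symm_apply] at this
    exact this
  rwa [hcr.closure_eq] at hy

lemma pb_exists_orbit (F : Y → Y) (hFs : Function.Surjective F) (n : ℕ) (y : Y) :
    ∃ z : ℕ → Y, (∀ i, F (z (i+1)) = z i) ∧ z n = y := by
  let b : ℕ → Y := fun i => Nat.rec y (fun _ p => (hFs p).choose) i
  have hb : ∀ i, F (b (i+1)) = b i := fun i => (hFs (b i)).choose_spec
  refine ⟨fun i => if n ≤ i then b (i - n) else F^[n - i] y, ?_, by simp [b]⟩
  intro i
  by_cases h1 : n ≤ i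
  · have h2 : n ≤ i + 1 := by omega
    simp only [h1, h2, if_true]
    have : i + 1 - n = (i - n) + 1 := by omega
    rw [this, hb]
  · by_cases h2 : n ≤ i + 1
    · have hn : n = i + 1 := by omega
      simp only [h1, h2, if_true, if_false]
      have h3 : i + 1 - n = 0 := by omega
      rw [h3]
      have h4 : n - i = 1 := by omega
      rw [h4]
      simp [b]
    · simp only [h1, h2, if_false]
      have : n - i = (n - (i+1)) + 1 := by omega
      rw [this, Function.iterate_succ_apply']

/-- Invariant for the inductive choice of homeomorphisms in Brown's theorem. -/
def pbInv (π : Y → T) (F : Y → Y) (n : ℕ) (s : (Y ≃ₜ Y) × ℝ) : Prop :=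
  0 < s.2 ∧ (∀ p, π (s.1 p) = π p) ∧
    ∀ a b, dist (s.1 a) (s.1 b) ≤ s.2 → ∀ j, j ≤ n → dist (F^[j] a) (F^[j] b) ≤ 1/(n+1)

lemma pb_unif_iter (F : Y → Y) (hF : Continuous F) (n : ℕ) (ρ : ℝ) (hρ : 0 < ρ) :
    ∃ δ > (0:ℝ), ∀ a b : Y, dist a b ≤ δ → ∀ j ≤ n, dist (F^[j] a) (F^[j] b) ≤ ρ := by
  induction n with
  | zero =>
    refine ⟨ρ, hρ, fun a b hab j hj => ?_⟩
    interval_cases j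
    simpa using hab
  | succ n ih =>
    obtain ⟨δ₀, hδ₀, h₀⟩ := ih
    have huc : UniformContinuous (F^[n+1]) :=
      CompactSpace.uniformContinuous_of_continuous (hF.iterate (n+1))
    obtain ⟨δ₁, hδ₁, h₁⟩ := Metric.uniformContinuous_iff.mp huc ρ hρ
    refine ⟨min δ₀ (δ₁/2), by positivity, fun a b hab j hj => ?_⟩
    rcases Nat.lt_or_ge j (n+1) with hj' | hj'
    · exact h₀ a b (hab.trans (min_le_left _ _)) j (by omega)
    · have hj'' : j = n + 1 := by omega
      subst hj''
      have : dist a b < δ₁ := lt_of_le_of_lt (hab.trans (min_le_right _ _)) (by linarith)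
      exact le_of_lt (h₁ this)

lemma pb_seq (π : Y → T) (F : Y → Y) (hF : Continuous F)
    (hNH : ∀ δ > (0:ℝ), ∃ G : Y ≃ₜ Y, (∀ p, π (G p) = π p) ∧ ∀ p, dist (G p) (F p) < δ)
    (ε : ℝ) (hε : 0 < ε) :
    ∃ (g : ℕ → Y ≃ₜ Y) (c : ℕ → ℝ),
      g 0 = Homeomorph.refl Y ∧ c 0 ≤ ε ∧
      (∀ n, 0 < c n) ∧
      (∀ n p, π (g n p) = π p) ∧
      (∀ n a b, dist (g n a) (g n b) ≤ c n → ∀ j, j ≤ n → dist (F^[j] a) (F^[j] b) ≤ 1/(n+1)) ∧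
      (∀ n, c (n+1) ≤ c n / 2) ∧
      (∀ n a, dist (g (n+1) a) (g n (F a)) ≤ c n / 4) := by
  classical
  have hbase : pbInv π F 0 (Homeomorph.refl Y, min ε 1) := by
    refine ⟨by positivity, fun p => rfl, fun a b hab j hj => ?_⟩
    interval_cases j
    simp only [Function.iterate_zero, id_eq, Nat.cast_zero]
    norm_num
    exact hab.trans (min_le_right _ _)
  have hstep : ∀ n s, pbInv π F n s → ∃ s', pbInv π F (n+1) s' ∧ s'.2 ≤ s.2/2 ∧
      ∀ a, dist (s'.1 a) (s.1 (F a)) ≤ s.2/4 := by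
    rintro n ⟨g, c⟩ ⟨hc, hgfib, -⟩
    have hgu : UniformContinuous g :=
      CompactSpace.uniformContinuous_of_continuous g.continuous
    obtain ⟨δ₀, hδ₀, h₀⟩ := Metric.uniformContinuous_iff.mp hgu (c/4) (by positivity)
    obtain ⟨H, hHfib, hHF⟩ := hNH δ₀ hδ₀
    obtain ⟨δ₂, hδ₂, h₂⟩ := pb_unif_iter F hF (n+1) (1/(n+1+1)) (by positivity)
    have hgu' : UniformContinuous (H.trans g).symm :=
      CompactSpace.uniformContinuous_of_continuous (H.trans g).symm.continuous
    obtain ⟨γ, hγ, hγ'⟩ := Metric.uniformContinuous_iff.mp hgu' δ₂ hδ₂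
    refine ⟨(H.trans g, min (c/2) (γ/2)), ⟨by positivity, fun p => ?_, fun a b hab j hj => ?_⟩,
      min_le_left _ _, fun a => ?_⟩
    · show π (g (H p)) = π p
      rw [hgfib, hHfib]
    · have h3 : dist ((H.trans g) a) ((H.trans g) b) < γ :=
        lt_of_le_of_lt (hab.trans (min_le_right _ _)) (by linarith)
      have h4 := hγ' h3
      rw [(H.trans g).symm_apply_apply, (H.trans g).symm_apply_apply] at h4
      have := h₂ a b h4.le j hj
      convert this using 3
      push_cast
      ring
    · show dist (g (H a)) (g (F a)) ≤ c/4
      exact le_of_lt (h₀ (hHF a))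
  let Tt : ∀ n, {s : (Y ≃ₜ Y) × ℝ // pbInv π F n s} := fun n =>
    Nat.rec ⟨_, hbase⟩ (fun n p => ⟨(hstep n p.1 p.2).choose, (hstep n p.1 p.2).choose_spec.1⟩) n
  have hTt : ∀ n, ((Tt (n+1)).1.2 ≤ (Tt n).1.2/2 ∧
      ∀ a, dist ((Tt (n+1)).1.1 a) ((Tt n).1.1 (F a)) ≤ (Tt n).1.2/4) :=
    fun n => ⟨(hstep n (Tt n).1 (Tt n).2).choose_spec.2.1,
      (hstep n (Tt n).1 (Tt n).2).choose_spec.2.2⟩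
  exact ⟨fun n => (Tt n).1.1, fun n => (Tt n).1.2, rfl, min_le_left _ _,
    fun n => ((Tt n).2).1, fun n => ((Tt n).2).2.1, fun n => ((Tt n).2).2.2,
    fun n => (hTt n).1, fun n => (hTt n).2⟩
end BrownAux

/-- Parameterized Brown theorem: if `{f_t}_{t∈I}` is a near-isotopy of a compact metric
space `X` (with compact metric parameter space `I`), and `F(x,t) = (f_t x, t)` is the
corresponding fat map, then for every `ε > 0` there is a homeomorphism
`β : lim(X×I, F) → X×I` with `β(ι_t(lim(X,f_t))) = X×{t}` for every `t`, and
`dist (β z) (π₀ z) < ε` for every `z ∈ lim(X×I,F)`. -/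
theorem parameterized_brown {X I : Type*}
    [MetricSpace X] [CompactSpace X] [MetricSpace I] [CompactSpace I]
    (f : X × I → X) (hf : Continuous f)
    (hNI : ∀ ε > (0 : ℝ), ∃ h : I → X ≃ₜ X,
        Continuous (fun p : X × I => h p.2 p.1) ∧
        ∀ p : X × I, dist (h p.2 p.1) (f p) < ε)
    (ε : ℝ) (hε : 0 < ε) :
    ∃ β : InvLim (fun p : X × I => (f p, p.2)) ≃ₜ X × I,
      (∀ t : I, Set.range (fun x : InvLim (fun x => f (x, t)) => β (iota f t x))
          = Set.univ ×ˢ ({t} : Set I)) ∧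
      (∀ z : InvLim (fun p : X × I => (f p, p.2)), dist (β z) (z.val 0) < ε) := by
  classical
  set F : X × I → X × I := fun p => (f p, p.2) with hFdef
  have hFc : Continuous F := hf.prodMk continuous_snd
  -- fiber-preserving near-homeomorphisms approximating F
  have hNH : ∀ δ > (0:ℝ), ∃ G : (X × I) ≃ₜ (X × I),
      (∀ p, (G p).2 = p.2) ∧ ∀ p, dist (G p) (F p) < δ := by
    intro δ hδ
    obtain ⟨h, hc, hd⟩ := hNI δ hδ
    let E : (X × I) ≃ (X × I) :=
      { toFun := fun p => (h p.2 p.1, p.2)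
        invFun := fun p => ((h p.2).symm p.1, p.2)
        left_inv := fun p => by simp
        right_inv := fun p => by simp }
    have hEc : Continuous E := hc.prodMk continuous_snd
    refine ⟨Continuous.homeoOfEquivCompactToT2 (f := E) hEc, fun p => rfl, fun p => ?_⟩
    show dist ((h p.2 p.1, p.2) : X × I) (F p) < δ
    rw [Prod.dist_eq]
    exact max_lt (hd p) (by simpa [hFdef] using hδ)
  have hFs : Function.Surjective F :=
    pb_surj_of_near F hFc (fun δ hδ => (hNH δ hδ).imp fun G hG => hG.2)
  obtain ⟨g, c, hg0, hc0, hcpos, hgfib, hginj, hchalf, hgclose⟩ :=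
    pb_seq Prod.snd F hFc hNH (ε/4) (by positivity)
  have hcdecay : ∀ n k, c (n+k) ≤ c n / 2^k := by
    intro n k; induction k with
    | zero => simp
    | succ k ih =>
      calc c (n+(k+1)) = c ((n+k)+1) := rfl
        _ ≤ c (n+k)/2 := hchalf _
        _ ≤ (c n / 2^k)/2 := by linarith
        _ = c n / 2^(k+1) := by ring
  -- inverse limit facts
  have hiter : ∀ (z : InvLim F) (j i : ℕ), F^[j] (z.val (i+j)) = z.val i := by
    intro z j
    induction j with
    | zero => intro i; simp
    | succ j ih =>
      intro i
      rw [show i + (j+1) = (i+1)+j from by ring, Function.iterate_succ_apply', ih (i+1), z.2 i]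
  have hsnd : ∀ (z : InvLim F) i, (z.val i).2 = (z.val 0).2 := by
    intro z i
    induction i with
    | zero => rfl
    | succ i ih => rw [← ih, ← z.2 i]
  set φ : ℕ → InvLim F → X × I := fun n z => g n (z.val n) with hφdef
  have hφstep : ∀ n (z : InvLim F), dist (φ (n+1) z) (φ n z) ≤ c n / 4 := by
    intro n z
    have := hgclose n (z.val (n+1))
    rw [z.2 n] at this
    exact this
  have hφcau : ∀ n m (z : InvLim F), dist (φ (n+m) z) (φ n z) ≤ c n / 2 * (1 - (1/2)^m) := by
    intro n m z
    induction m with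
    | zero => simp
    | succ m ih =>
      calc dist (φ (n+(m+1)) z) (φ n z)
          ≤ dist (φ ((n+m)+1) z) (φ (n+m) z) + dist (φ (n+m) z) (φ n z) := dist_triangle _ _ _
        _ ≤ c (n+m)/4 + c n/2 * (1 - (1/2)^m) := add_le_add (hφstep _ z) ih
        _ ≤ (c n / 2^m)/4 + c n/2 * (1 - (1/2)^m) := by
            have := hcdecay n m; linarith
        _ = c n / 2 * (1 - (1/2)^(m+1)) := by
            have h2 : (2:ℝ)^m ≠ 0 := by positivity
            have h3 : ((1:ℝ)/2)^m * 2^m = 1 := by rw [← mul_pow]; norm_num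
            field_simp
            linear_combination (-2 * c n) * h3
  have hφcau' : ∀ n m (z : InvLim F), dist (φ (n+m) z) (φ n z) ≤ c n / 2 := by
    intro n m z
    refine (hφcau n m z).trans ?_
    have h1 : (0:ℝ) ≤ (1/2:ℝ)^m := by positivity
    have h2 : (0:ℝ) < c n := hcpos n
    nlinarith
  have hcauchy : ∀ z : InvLim F, CauchySeq (fun n => φ n z) := by
    intro z
    apply cauchySeq_of_le_geometric (1/2) (c 0) (by norm_num)
    intro n
    rw [dist_comm]
    calc dist (φ (n+1) z) (φ n z) ≤ c n / 4 := hφstep n z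
      _ ≤ c n := by have := hcpos n; linarith
      _ ≤ c 0 / 2^n := by have := hcdecay 0 n; simpa using this
      _ = c 0 * (1/2)^n := by rw [one_div, inv_pow, div_eq_mul_inv]
  have hlim : ∀ z : InvLim F, ∃ y, Filter.Tendsto (fun n => φ n z) Filter.atTop (nhds y) :=
    fun z => cauchySeq_tendsto_of_complete (hcauchy z)
  choose b hb using hlim
  have hdistb : ∀ n (z : InvLim F), dist (b z) (φ n z) ≤ c n / 2 := by
    intro n z
    have h1 : Filter.Tendsto (fun m => φ (m+n) z) Filter.atTop (nhds (b z)) :=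
      (hb z).comp (Filter.tendsto_add_atTop_nat n)
    have h2 : Filter.Tendsto (fun m => dist (φ (m+n) z) (φ n z)) Filter.atTop
        (nhds (dist (b z) (φ n z))) := h1.dist tendsto_const_nhds
    refine le_of_tendsto h2 (Filter.Eventually.of_forall fun m => ?_)
    rw [add_comm]
    exact hφcau' n m z
  have hφcont : ∀ n, Continuous (φ n) := fun n =>
    (g n).continuous.comp ((continuous_apply n).comp continuous_subtype_val)
  have hczero : Filter.Tendsto c Filter.atTop (nhds 0) := by
    have h1 : Filter.Tendsto (fun n : ℕ => c 0 * (1/2:ℝ)^n) Filter.atTop (nhds 0) := by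
      simpa using (tendsto_pow_atTop_nhds_zero_of_lt_one (by norm_num : (0:ℝ) ≤ 1/2)
        (by norm_num : (1/2:ℝ) < 1)).const_mul (c 0)
    refine squeeze_zero (fun n => (hcpos n).le) (fun n => ?_) h1
    have := hcdecay 0 n
    simp only [Nat.zero_add] at this
    calc c n ≤ c 0 / 2^n := by simpa using this
      _ = c 0 * (1/2)^n := by rw [one_div, inv_pow, div_eq_mul_inv]
  have hbcont : Continuous b := by
    have hU : TendstoUniformly (fun n z => φ n z) b Filter.atTop := by
      rw [Metric.tendstoUniformly_iff]
      intro ρ hρ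
      filter_upwards [hczero.eventually_lt_const hρ] with n hn z
      calc dist (b z) (φ n z) ≤ c n / 2 := hdistb n z
        _ < ρ := by linarith [hcpos n]
    exact hU.continuous (Filter.Eventually.of_forall hφcont).frequently
  have hbinj : Function.Injective b := by
    intro z w hzw
    apply Subtype.ext; funext m
    have key : ∀ n, m ≤ n → dist (z.val m) (w.val m) ≤ 1/(n+1) := by
      intro n hmn
      have h1 : dist (φ n z) (φ n w) ≤ c n := by
        calc dist (φ n z) (φ n w) ≤ dist (φ n z) (b z) + dist (b z) (φ n w) := dist_triangle _ _ _
          _ = dist (φ n z) (b z) + dist (b w) (φ n w) := by rw [hzw]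
          _ ≤ c n/2 + c n/2 := add_le_add (by rw [dist_comm]; exact hdistb n z) (hdistb n w)
          _ = c n := by ring
      have h2 := hginj n _ _ h1 (n - m) (Nat.sub_le _ _)
      have e1 : F^[n-m] (z.val n) = z.val m := by
        have := hiter z (n-m) m
        rwa [show m + (n-m) = n from by omega] at this
      have e2 : F^[n-m] (w.val n) = w.val m := by
        have := hiter w (n-m) m
        rwa [show m + (n-m) = n from by omega] at this
      rwa [e1, e2] at h2
    have hle : dist (z.val m) (w.val m) ≤ 0 := by
      refine ge_of_tendsto tendsto_one_div_add_atTop_nhds_zero_nat ?_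
      filter_upwards [Filter.eventually_ge_atTop m] with n hn
      exact key n hn
    exact dist_le_zero.mp hle
  haveI hLcomp : CompactSpace (InvLim F) := by
    rw [← isCompact_iff_compactSpace]
    apply IsClosed.isCompact
    have hrw : InvLim F = ⋂ i, {x : ℕ → X × I | F (x (i+1)) = x i} := by
      ext x
      simp only [InvLim, Set.mem_setOf_eq, Set.mem_iInter]
    rw [hrw]
    exact isClosed_iInter fun i => isClosed_eq (hFc.comp (continuous_apply (i+1))) (continuous_apply i)
  have hbsurj : Function.Surjective b := by
    intro y
    have hcl : IsClosed (Set.range b) := (isCompact_range hbcont).isClosed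
    have hy : y ∈ closure (Set.range b) := by
      rw [Metric.mem_closure_iff]
      intro ρ hρ
      obtain ⟨n, hn⟩ := (hczero.eventually_lt_const hρ).exists
      obtain ⟨zf, hzf, hzfn⟩ := pb_exists_orbit F hFs n ((g n).symm y)
      refine ⟨b ⟨zf, hzf⟩, Set.mem_range_self _, ?_⟩
      have h1 : φ n ⟨zf, hzf⟩ = y := by
        show g n (zf n) = y
        rw [hzfn, (g n).apply_symm_apply]
      calc dist y (b ⟨zf,hzf⟩) = dist (b ⟨zf,hzf⟩) (φ n ⟨zf,hzf⟩) := by rw [h1, dist_comm]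
        _ ≤ c n / 2 := hdistb n _
        _ < ρ := by linarith [hcpos n]
    rwa [hcl.closure_eq] at hy
  have hb2 : ∀ z : InvLim F, (b z).2 = (z.val 0).2 := by
    intro z
    have h1 : Filter.Tendsto (fun n => (φ n z).2) Filter.atTop (nhds (b z).2) :=
      (continuous_snd.tendsto _).comp (hb z)
    have h2 : (fun n => (φ n z).2) = fun _ => (z.val 0).2 := by
      funext n
      show (g n (z.val n)).2 = _
      rw [hgfib n, hsnd z n]
    rw [h2] at h1
    exact tendsto_nhds_unique h1 tendsto_const_nhds
  let E : InvLim F ≃ (X × I) := Equiv.ofBijective b ⟨hbinj, hbsurj⟩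
  have hEc : Continuous E := hbcont
  refine ⟨Continuous.homeoOfEquivCompactToT2 (f := E) hEc, ?_, ?_⟩
  · intro t
    ext p
    simp only [Set.mem_range, Set.mem_prod, Set.mem_univ, Set.mem_singleton_iff, true_and]
    constructor
    · rintro ⟨x, rfl⟩
      show (b (iota f t x)).2 = t
      rw [hb2]
      rfl
    · intro hpt
      obtain ⟨z, hz⟩ := hbsurj p
      have ht : ∀ i, (z.val i).2 = t := by
        intro i
        rw [hsnd z i, ← hb2 z]
        show (b z).2 = t
        rw [hz, hpt]
      have hx : ∀ i, (fun x => f (x, t)) ((fun i => (z.val i).1) (i+1)) = (fun i => (z.val i).1) i := by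
        intro i
        show f ((z.val (i+1)).1, t) = (z.val i).1
        have h3 : ((z.val (i+1)).1, t) = z.val (i+1) := by rw [← ht (i+1)]
        rw [h3]
        exact congrArg Prod.fst (z.2 i)
      refine ⟨⟨fun i => (z.val i).1, hx⟩, ?_⟩
      have hxz : iota f t ⟨fun i => (z.val i).1, hx⟩ = z := by
        apply Subtype.ext; funext i
        show ((z.val i).1, t) = z.val i
        rw [← ht i]
      show E (iota f t ⟨fun i => (z.val i).1, hx⟩) = p
      rw [hxz]
      exact hz
  · intro z
    have h0 : φ 0 z = z.val 0 := by
      show g 0 (z.val 0) = _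
      rw [hg0]
      rfl
    calc dist (E z) (z.val 0) = dist (b z) (φ 0 z) := by rw [h0]; rfl
      _ ≤ c 0 / 2 := hdistb 0 z
      _ < ε := by linarith
end

section
/- Let I and X be compact metric spaces, {f_t}_{t∈I} a near-isotopy of X with fat map F on Z = X×I, and let F̄ denote the closure in C(lim(Z,F), Z) (uniform metric) of the set E = {H∘π_k : H a slice-preserving homeomorphism of Z, k ∈ ℕ}. Then: (i) every α ∈ F̄ is surjective and satisfies α(ι_t(lim(X,f_t))) = X×{t} for all t ∈ I; (ii) for every δ > 0, the set of δ-maps in F̄ is open and dense in F̄; (iii) injective maps are dense in F̄. -/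
/-- The metric `d_∞(x,y) = max_i min(d(x_i,y_i),1)/(i+1)` on `X^ℕ`. -/
noncomputable def dInfty {X : Type*} [MetricSpace X] (x y : ℕ → X) : ℝ :=
  ⨆ i : ℕ, min (dist (x i) (y i)) 1 / (i + 1 : ℝ)

section DInfty
variable {Y : Type*} [MetricSpace Y]

/-- The `i`-th term of the sup defining `dInfty`. -/
noncomputable def dTerm (z w : ℕ → Y) (i : ℕ) : ℝ :=
  min (dist (z i) (w i)) 1 / (i + 1 : ℝ)

lemma dTerm_nonneg (z w : ℕ → Y) (i : ℕ) : 0 ≤ dTerm z w i := by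
  apply div_nonneg (le_min dist_nonneg zero_le_one)
  positivity

lemma dTerm_le (z w : ℕ → Y) (i : ℕ) : dTerm z w i ≤ 1 / (i + 1 : ℝ) := by
  apply div_le_div_of_nonneg_right ?_ ?_ |>.trans_eq rfl
  · exact min_le_right _ _
  · positivity

lemma dTerm_le_one (z w : ℕ → Y) (i : ℕ) : dTerm z w i ≤ 1 := by
  refine (dTerm_le z w i).trans ?_
  rw [div_le_one (by positivity)]
  linarith [(Nat.cast_nonneg i : (0:ℝ) ≤ i)]

lemma bddAbove_dTerm (z w : ℕ → Y) : BddAbove (Set.range (fun i => dTerm z w i)) :=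
  ⟨1, by rintro r ⟨i, rfl⟩; exact dTerm_le_one z w i⟩

lemma dInfty_eq (z w : ℕ → Y) : dInfty z w = ⨆ i, dTerm z w i := rfl

lemma dTerm_le_dInfty (z w : ℕ → Y) (i : ℕ) : dTerm z w i ≤ dInfty z w :=
  le_ciSup (bddAbove_dTerm z w) i

lemma dInfty_le (z w : ℕ → Y) {c : ℝ} (h : ∀ i, dTerm z w i ≤ c) : dInfty z w ≤ c :=
  ciSup_le h

lemma dInfty_nonneg (z w : ℕ → Y) : 0 ≤ dInfty z w :=
  (dTerm_nonneg z w 0).trans (dTerm_le_dInfty z w 0)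

lemma dInfty_le_of_eq_upto (z w : ℕ → Y) (m : ℕ) (h : ∀ i ≤ m, z i = w i) :
    dInfty z w ≤ 1 / (m + 2 : ℝ) := by
  apply dInfty_le
  intro i
  rcases le_or_gt i m with hi | hi
  · simp [dTerm, h i hi, dist_self]
    positivity
  · refine (dTerm_le z w i).trans ?_
    apply one_div_le_one_div_of_le (by positivity)
    have : (m : ℝ) + 1 ≤ i := by exact_mod_cast hi
    linarith

lemma dInfty_pos_of_ne (z w : ℕ → Y) (h : z ≠ w) : 0 < dInfty z w := by
  obtain ⟨j, hj⟩ : ∃ j, z j ≠ w j := by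
    by_contra hc; push_neg at hc; exact h (funext hc)
  have : 0 < dTerm z w j := by
    apply div_pos _ (by positivity)
    exact lt_min (dist_pos.mpr hj) one_pos
  exact this.trans_le (dTerm_le_dInfty z w j)

/-- partial max of the first `N+1` terms -/
noncomputable def pMax (z w : ℕ → Y) : ℕ → ℝ
  | 0 => dTerm z w 0
  | (N + 1) => max (pMax z w N) (dTerm z w (N + 1))

lemma dTerm_le_pMax (z w : ℕ → Y) {i N : ℕ} (h : i ≤ N) : dTerm z w i ≤ pMax z w N := by
  induction N with
  | zero =>
      have hi : i = 0 := Nat.le_zero.mp h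
      subst hi; simp [pMax]
  | succ n ih =>
      rcases le_or_gt i n with hi | hi
      · exact (ih hi).trans (le_max_left _ _)
      · have hi2 : i = n + 1 := le_antisymm h hi
        subst hi2; exact le_max_right _ _

lemma pMax_le_dInfty (z w : ℕ → Y) (N : ℕ) : pMax z w N ≤ dInfty z w := by
  induction N with
  | zero => exact dTerm_le_dInfty z w 0
  | succ n ih => exact max_le ih (dTerm_le_dInfty z w (n+1))

lemma dInfty_le_pMax_add (z w : ℕ → Y) (N : ℕ) :
    dInfty z w ≤ pMax z w N + 1 / (N + 2 : ℝ) := by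
  apply dInfty_le
  intro i
  rcases le_or_gt i N with hi | hi
  · have h2 : (0:ℝ) ≤ 1 / (N + 2 : ℝ) := by positivity
    linarith [dTerm_le_pMax z w hi]
  · have h1 : dTerm z w i ≤ 1 / (i + 1 : ℝ) := dTerm_le z w i
    have h2 : (1 : ℝ) / (i + 1 : ℝ) ≤ 1 / (N + 2 : ℝ) := by
      apply one_div_le_one_div_of_le (by positivity)
      have : (N : ℝ) + 1 ≤ i := by exact_mod_cast hi
      linarith
    have h3 : 0 ≤ pMax z w N :=
      (dTerm_nonneg z w 0).trans (dTerm_le_pMax z w (Nat.zero_le N))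
    linarith

lemma continuous_dTerm (i : ℕ) :
    Continuous (fun p : (ℕ → Y) × (ℕ → Y) => dTerm p.1 p.2 i) := by
  apply Continuous.div_const
  exact ((Continuous.dist ((continuous_apply i).comp continuous_fst)
    ((continuous_apply i).comp continuous_snd)).min continuous_const)

lemma continuous_pMax (N : ℕ) :
    Continuous (fun p : (ℕ → Y) × (ℕ → Y) => pMax p.1 p.2 N) := by
  induction N with
  | zero => exact continuous_dTerm 0
  | succ n ih => exact ih.max (continuous_dTerm (n+1))

lemma continuous_dInfty :
    Continuous (fun p : (ℕ → Y) × (ℕ → Y) => dInfty p.1 p.2) := by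
  have hu : TendstoUniformly (fun N (p : (ℕ → Y) × (ℕ → Y)) => pMax p.1 p.2 N)
      (fun p => dInfty p.1 p.2) Filter.atTop := by
    rw [Metric.tendstoUniformly_iff]
    intro ε hε
    obtain ⟨N₀, hN₀⟩ := exists_nat_gt (1/ε)
    filter_upwards [Filter.eventually_ge_atTop N₀] with N hN p
    have h1 : pMax p.1 p.2 N ≤ dInfty p.1 p.2 := pMax_le_dInfty _ _ N
    have h2 : dInfty p.1 p.2 ≤ pMax p.1 p.2 N + 1 / (N + 2 : ℝ) := dInfty_le_pMax_add _ _ N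
    rw [Real.dist_eq, abs_sub_lt_iff]
    have hN2 : (1:ℝ) / (N + 2 : ℝ) < ε := by
      rw [div_lt_iff₀ (by positivity)]
      have : (N₀ : ℝ) ≤ N := by exact_mod_cast hN
      have h1ε : 1/ε < N₀ := hN₀
      have : 1/ε < (N:ℝ) + 2 := by linarith
      calc (1:ℝ) = ε * (1/ε) := by field_simp
        _ < ε * ((N:ℝ)+2) := by apply mul_lt_mul_of_pos_left this hε
    constructor <;> linarith
  exact hu.continuous (Filter.Eventually.of_forall continuous_pMax).frequently

end DInfty


set_option linter.unusedSectionVars false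
set_option maxHeartbeats 1000000
section InvLimAux
variable {A : Type*}

lemma invLim_proj_surj {g : A → A} (hg : Function.Surjective g) (k : ℕ) (a : A) :
    ∃ z : InvLim g, z.val k = a := by
  classical
  let c : A → A := fun b => Classical.choose (hg b)
  have hc : ∀ b, g (c b) = b := fun b => Classical.choose_spec (hg b)
  refine ⟨⟨fun i => if i ≤ k then g^[k - i] a else c^[i - k] a, ?_⟩, by simp⟩
  intro i
  rcases le_or_gt (i + 1) k with h1 | h1
  · have h2 : i ≤ k := le_of_lt h1
    simp only [if_pos h1, if_pos h2]
    rw [← Function.iterate_succ_apply' g]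
    congr 1
    omega
  · have h2 : ¬ (i + 1 ≤ k) := not_le.mpr h1
    rcases le_or_gt i k with h3 | h3
    · have hik : i = k := by omega
      subst hik
      simp only [if_neg h2, if_pos le_rfl]
      have : i + 1 - i = 1 := by omega
      rw [this]
      simp [hc]
    · have h4 : ¬ (i ≤ k) := not_le.mpr h3
      simp only [if_neg h2, if_neg h4]
      have : i + 1 - k = (i - k) + 1 := by omega
      rw [this, Function.iterate_succ_apply' c, hc]

lemma invLim_coord {g : A → A} (z : InvLim g) (i j : ℕ) :
    z.val i = g^[j] (z.val (i + j)) := by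
  induction j with
  | zero => rfl
  | succ n ih =>
      rw [Function.iterate_succ_apply, ← Nat.add_assoc, z.property (i + n)]
      exact ih

lemma isClosed_invLim [TopologicalSpace A] [T2Space A] {g : A → A} (hg : Continuous g) :
    IsClosed (InvLim g) := by
  have : InvLim g = ⋂ i, {x : ℕ → A | g (x (i + 1)) = x i} := by
    ext x; simp [InvLim, Set.mem_iInter]
  rw [this]
  exact isClosed_iInter fun i =>
    isClosed_eq (hg.comp (continuous_apply (i + 1))) (continuous_apply i)

end InvLimAux

section ImageAux
variable {A B : Type*} [TopologicalSpace A] [CompactSpace A] [MetricSpace B]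

lemma image_eq_of_mem_closure {s : Set C(A, B)} {α : C(A, B)} (hα : α ∈ closure s)
    {K : Set A} (hK : IsCompact K) {T : Set B} (hT : IsClosed T)
    (h : ∀ β ∈ s, β '' K = T) : ⇑α '' K = T := by
  apply Set.Subset.antisymm
  · rintro _ ⟨x, hx, rfl⟩
    rw [← hT.closure_eq, Metric.mem_closure_iff]
    intro ε hε
    obtain ⟨β, hβ, hd⟩ := Metric.mem_closure_iff.mp hα ε hε
    exact ⟨β x, (h β hβ) ▸ ⟨x, hx, rfl⟩,
      lt_of_le_of_lt (ContinuousMap.dist_apply_le_dist x) hd⟩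
  · intro y hy
    have hcl : IsClosed (⇑α '' K) := (hK.image α.continuous).isClosed
    rw [← hcl.closure_eq, Metric.mem_closure_iff]
    intro ε hε
    obtain ⟨β, hβ, hd⟩ := Metric.mem_closure_iff.mp hα ε hε
    obtain ⟨x, hx, hβx⟩ := (h β hβ) ▸ hy
    refine ⟨α x, ⟨x, hx, rfl⟩, ?_⟩
    calc dist y (α x) = dist (β x) (α x) := by rw [hβx]
      _ ≤ dist β α := ContinuousMap.dist_apply_le_dist x
      _ < ε := by rwa [dist_comm] at hd
end ImageAux
section FAux
variable {X I : Type*} [MetricSpace X] [CompactSpace X] [MetricSpace I] [CompactSpace I]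
  (f : X × I → X)

lemma ft_surj (hf : Continuous f)
    (hNI : ∀ ε > (0 : ℝ), ∃ h : I → X ≃ₜ X,
        Continuous (fun p : X × I => h p.2 p.1) ∧
        ∀ p : X × I, dist (h p.2 p.1) (f p) < ε)
    (t : I) : Function.Surjective (fun x => f (x, t)) := by
  intro y
  have hcont : Continuous (fun x : X => f (x, t)) :=
    hf.comp (continuous_id.prodMk continuous_const)
  have hr : IsClosed (Set.range fun x : X => f (x, t)) :=
    (isCompact_range hcont).isClosed
  have hy : y ∈ closure (Set.range fun x : X => f (x, t)) := by
    rw [Metric.mem_closure_iff]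
    intro ε hε
    obtain ⟨h, _, hd⟩ := hNI ε hε
    refine ⟨f ((h t).symm y, t), ⟨(h t).symm y, rfl⟩, ?_⟩
    have := hd ((h t).symm y, t)
    simpa using this
  rwa [hr.closure_eq] at hy

lemma F_surj (hf : Continuous f)
    (hNI : ∀ ε > (0 : ℝ), ∃ h : I → X ≃ₜ X,
        Continuous (fun p : X × I => h p.2 p.1) ∧
        ∀ p : X × I, dist (h p.2 p.1) (f p) < ε) :
    Function.Surjective (fun p : X × I => (f p, p.2)) := by
  rintro ⟨y, t⟩
  obtain ⟨x, hx⟩ := ft_surj f hf hNI t y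
  exact ⟨(x, t), by simp [hx]⟩

/-- slice-preserving homeomorphisms uniformly close to the fat map `F`. -/
lemma exists_sliceHomeo_near
    (hNI : ∀ ε > (0 : ℝ), ∃ h : I → X ≃ₜ X,
        Continuous (fun p : X × I => h p.2 p.1) ∧
        ∀ p : X × I, dist (h p.2 p.1) (f p) < ε)
    {ε : ℝ} (hε : 0 < ε) :
    ∃ G : (X × I) ≃ₜ (X × I), (∀ p, (G p).2 = p.2) ∧
      ∀ p : X × I, dist (G p) (f p, p.2) < ε := by
  obtain ⟨h, hc, hd⟩ := hNI ε hε
  let e : (X × I) ≃ (X × I) :=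
    { toFun := fun p => (h p.2 p.1, p.2)
      invFun := fun p => ((h p.2).symm p.1, p.2)
      left_inv := fun p => by simp
      right_inv := fun p => by simp }
  have hce : Continuous e := hc.prodMk continuous_snd
  refine ⟨hce.homeoOfEquivCompactToT2, fun p => rfl, fun p => ?_⟩
  have : dist ((h p.2 p.1, p.2) : X × I) (f p, p.2) = dist (h p.2 p.1) (f p) := by
    rw [Prod.dist_eq]
    simp [max_eq_left dist_nonneg]
  calc dist (hce.homeoOfEquivCompactToT2 p) ((f p, p.2) : X × I)
      = dist (h p.2 p.1) (f p) := this
    _ < ε := hd p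

/-- slice-preserving homeomorphisms approximating `H ∘ F^[n]`. -/
lemma exists_P
    (hNI : ∀ ε > (0 : ℝ), ∃ h : I → X ≃ₜ X,
        Continuous (fun p : X × I => h p.2 p.1) ∧
        ∀ p : X × I, dist (h p.2 p.1) (f p) < ε)
    (n : ℕ) (H : (X × I) ≃ₜ (X × I)) (hH : ∀ p, (H p).2 = p.2)
    {ε : ℝ} (hε : 0 < ε) :
    ∃ P : (X × I) ≃ₜ (X × I), (∀ p, (P p).2 = p.2) ∧
      ∀ p : X × I, dist (P p) (H ((fun p : X × I => (f p, p.2))^[n] p)) < ε := by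
  induction n generalizing ε with
  | zero => exact ⟨H, hH, fun p => by simpa using hε⟩
  | succ n ih =>
      obtain ⟨P, hP1, hP2⟩ := ih (half_pos hε)
      obtain ⟨η, hη, hPu⟩ := Metric.uniformContinuous_iff.mp
        (CompactSpace.uniformContinuous_of_continuous P.continuous) (ε/2) (half_pos hε)
      obtain ⟨G, hG1, hG2⟩ := exists_sliceHomeo_near f hNI hη
      refine ⟨G.trans P, fun p => hP1 (G p) |>.trans (hG1 p), fun p => ?_⟩
      have h1 : dist (P (G p)) (P ((f p, p.2) : X × I)) < ε/2 := hPu (hG2 p)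
      have h2 : dist (P ((f p, p.2) : X × I))
          (H ((fun p : X × I => (f p, p.2))^[n] (f p, p.2))) < ε/2 := hP2 (f p, p.2)
      have h3 : (fun p : X × I => (f p, p.2))^[n+1] p
          = (fun p : X × I => (f p, p.2))^[n] (f p, p.2) :=
        Function.iterate_succ_apply _ n p
      calc dist ((G.trans P) p) (H ((fun p : X × I => (f p, p.2))^[n+1] p))
          ≤ dist (P (G p)) (P ((f p, p.2) : X × I))
            + dist (P ((f p, p.2) : X × I)) (H ((fun p : X × I => (f p, p.2))^[n+1] p)) :=
            dist_triangle _ _ _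
        _ < ε/2 + ε/2 := by rw [h3]; exact add_lt_add h1 h2
        _ = ε := add_halves ε

end FAux

section DeltaMap
variable {X I : Type*} [MetricSpace X] [CompactSpace X] [MetricSpace I] [CompactSpace I]
  (f : X × I → X)

set_option linter.unusedSectionVars false

lemma exists_deltaMap_near
    [CompactSpace ↥(InvLim (fun p : X × I => (f p, p.2)))]
    (hNI : ∀ ε > (0 : ℝ), ∃ h : I → X ≃ₜ X,
        Continuous (fun p : X × I => h p.2 p.1) ∧
        ∀ p : X × I, dist (h p.2 p.1) (f p) < ε)
    {δ ε : ℝ} (hδ : 0 < δ) (hε : 0 < ε)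
    (H : (X × I) ≃ₜ (X × I)) (hH : ∀ p, (H p).2 = p.2) (k : ℕ)
    (β : C(↥(InvLim (fun p : X × I => (f p, p.2))), X × I))
    (hβ : ∀ z, β z = H (z.val k)) :
    ∃ γ : C(↥(InvLim (fun p : X × I => (f p, p.2))), X × I),
      (∃ (P : (X × I) ≃ₜ (X × I)) (m : ℕ), (∀ p, (P p).2 = p.2) ∧
        ∀ z : InvLim (fun p : X × I => (f p, p.2)), γ z = P (z.val m)) ∧
      dist γ β < ε ∧
      ∀ z w : InvLim (fun p : X × I => (f p, p.2)),
        γ z = γ w → dInfty z.val w.val < δ := by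
  obtain ⟨N₀, hN₀⟩ := exists_nat_gt (1 / δ)
  set m := max k N₀ with hm
  have hm2 : 1 / ((m : ℝ) + 2) < δ := by
    rw [div_lt_iff₀ (by positivity)]
    have h1 : (N₀ : ℝ) ≤ m := by exact_mod_cast le_max_right k N₀
    have h2 : 1 / δ < (m : ℝ) + 2 := by linarith
    calc (1 : ℝ) = δ * (1 / δ) := by field_simp
      _ < δ * ((m : ℝ) + 2) := mul_lt_mul_of_pos_left h2 hδ
  obtain ⟨P, hP1, hP2⟩ := exists_P f hNI (m - k) H hH (half_pos hε)
  set γ : C(↥(InvLim (fun p : X × I => (f p, p.2))), X × I) :=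
    ⟨fun z => P (z.val m),
      P.continuous.comp ((continuous_apply m).comp continuous_subtype_val)⟩ with hγ
  refine ⟨γ, ⟨P, m, hP1, fun z => rfl⟩, ?_, ?_⟩
  · have hle : dist γ β ≤ ε / 2 := by
      rw [ContinuousMap.dist_le (half_pos hε).le]
      intro z
      have hco : z.val k = (fun p : X × I => (f p, p.2))^[m - k] (z.val m) := by
        have h0 := invLim_coord z k (m - k)
        rwa [Nat.add_sub_cancel' (le_max_left k N₀)] at h0
      have : γ z = P (z.val m) := rfl
      rw [this, hβ z, hco]
      exact (hP2 (z.val m)).le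
    linarith
  · intro z w hzw
    have hzm : z.val m = w.val m := P.injective hzw
    have hall : ∀ i ≤ m, z.val i = w.val i := by
      intro i hi
      have h1 := invLim_coord z i (m - i)
      have h2 := invLim_coord w i (m - i)
      rw [Nat.add_sub_cancel' hi] at h1 h2
      rw [h1, h2, hzm]
    calc dInfty z.val w.val ≤ 1 / ((m : ℝ) + 2) := dInfty_le_of_eq_upto _ _ m hall
      _ < δ := hm2

end DeltaMap


/-- Ancel-style structure of the closure `F̄` of `E = {H ∘ π_k : H` a slice-preserving
homeomorphism of `Z = X×I`, `k ∈ ℕ}` in `C(lim(Z,F), Z)`: every element of `F̄` is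
surjective and maps `ι_t(lim(X,f_t))` onto `X×{t}`; for every `δ > 0` the `δ`-maps in
`F̄` form an open dense subset of `F̄`; and the injective maps are dense in `F̄`. -/
theorem closure_of_E_structure {X I : Type*}
    [MetricSpace X] [CompactSpace X] [MetricSpace I] [CompactSpace I]
    (f : X × I → X) (hf : Continuous f)
    (hNI : ∀ ε > (0 : ℝ), ∃ h : I → X ≃ₜ X,
        Continuous (fun p : X × I => h p.2 p.1) ∧
        ∀ p : X × I, dist (h p.2 p.1) (f p) < ε)
    (𝓕 : Set C(InvLim (fun p : X × I => (f p, p.2)), X × I))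
    (h𝓕 : 𝓕 = closure {α : C(InvLim (fun p : X × I => (f p, p.2)), X × I) |
        ∃ (H : (X × I) ≃ₜ (X × I)) (k : ℕ),
          (∀ p : X × I, (H p).2 = p.2) ∧
          ∀ z : InvLim (fun p : X × I => (f p, p.2)), α z = H (z.val k)}) :
    (∀ α ∈ 𝓕, Function.Surjective ⇑α ∧
        ∀ t : I, Set.range (fun x : InvLim (fun x => f (x, t)) => α (iota f t x))
          = Set.univ ×ˢ ({t} : Set I)) ∧
    (∀ δ > (0 : ℝ),
        IsOpen {α : 𝓕 | ∀ z w : InvLim (fun p : X × I => (f p, p.2)),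
            α.val z = α.val w → dInfty z.val w.val < δ} ∧
        Dense {α : 𝓕 | ∀ z w : InvLim (fun p : X × I => (f p, p.2)),
            α.val z = α.val w → dInfty z.val w.val < δ}) ∧
    Dense {α : 𝓕 | Function.Injective ⇑α.val} := by
  classical
  haveI hcL : CompactSpace ↥(InvLim (fun p : X × I => (f p, p.2))) :=
    isCompact_iff_compactSpace.mp
      ((isClosed_invLim (hf.prodMk continuous_snd)).isCompact)
  set E : Set C(↥(InvLim (fun p : X × I => (f p, p.2))), X × I) :=
    {α : C(↥(InvLim (fun p : X × I => (f p, p.2))), X × I) |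
      ∃ (H : (X × I) ≃ₜ (X × I)) (k : ℕ),
        (∀ p : X × I, (H p).2 = p.2) ∧
        ∀ z : InvLim (fun p : X × I => (f p, p.2)), α z = H (z.val k)} with hE
  -- part (ii), proved first so it can be reused in part (iii)
  have hOD : ∀ δ > (0 : ℝ),
      IsOpen {α : 𝓕 | ∀ z w : InvLim (fun p : X × I => (f p, p.2)),
          α.val z = α.val w → dInfty z.val w.val < δ} ∧
      Dense {α : 𝓕 | ∀ z w : InvLim (fun p : X × I => (f p, p.2)),
          α.val z = α.val w → dInfty z.val w.val < δ} := by
    intro δ hδ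
    constructor
    · -- openness
      rw [Metric.isOpen_iff]
      intro α hα
      set C : Set (↥(InvLim (fun p : X × I => (f p, p.2)))
          × ↥(InvLim (fun p : X × I => (f p, p.2)))) :=
        {p | δ ≤ dInfty p.1.val p.2.val} with hC
      have hCc : IsClosed C :=
        isClosed_le continuous_const
          (continuous_dInfty.comp
            ((continuous_subtype_val.comp continuous_fst).prodMk
              (continuous_subtype_val.comp continuous_snd)))
      by_cases hne : C.Nonempty
      · have hφc : Continuous (fun p : ↥(InvLim (fun p : X × I => (f p, p.2)))
            × ↥(InvLim (fun p : X × I => (f p, p.2))) =>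
            dist (α.val p.1) (α.val p.2)) :=
          (α.val.continuous.comp continuous_fst).dist
            (α.val.continuous.comp continuous_snd)
        obtain ⟨p₀, hp₀, hmin⟩ := hCc.isCompact.exists_isMinOn hne hφc.continuousOn
        have hφpos : 0 < dist (α.val p₀.1) (α.val p₀.2) := by
          rcases eq_or_lt_of_le (dist_nonneg : (0:ℝ) ≤ dist (α.val p₀.1) (α.val p₀.2))
            with h0 | h0
          · exfalso
            have h1 := hα p₀.1 p₀.2 (dist_eq_zero.mp h0.symm)
            exact absurd hp₀ (not_le.mpr h1)
          · exact h0
        refine ⟨dist (α.val p₀.1) (α.val p₀.2) / 2, by positivity, ?_⟩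
        intro β hβ z w hzw
        by_contra hcon
        have hzwC : (z, w) ∈ C := not_lt.mp hcon
        have h1 : dist (α.val p₀.1) (α.val p₀.2) ≤ dist (α.val z) (α.val w) :=
          hmin hzwC
        have hd : dist β.val α.val < dist (α.val p₀.1) (α.val p₀.2) / 2 := by
          have := Metric.mem_ball.mp hβ
          rwa [Subtype.dist_eq] at this
        have e1 : dist (α.val z) (β.val z) ≤ dist α.val β.val :=
          ContinuousMap.dist_apply_le_dist z
        have e2 : dist (β.val w) (α.val w) ≤ dist β.val α.val :=
          ContinuousMap.dist_apply_le_dist w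
        have e3 : dist (α.val z) (α.val w)
            ≤ dist (α.val z) (β.val w) + dist (β.val w) (α.val w) := by
          rw [← hzw]
          exact dist_triangle _ _ _
        have e1' : dist (α.val z) (β.val w) ≤ dist α.val β.val := by
          rw [← hzw]; exact e1
        have e5 : dist α.val β.val = dist β.val α.val := dist_comm _ _
        linarith
      · refine ⟨1, one_pos, ?_⟩
        intro β _ z w _
        by_contra hcon
        exact hne ⟨(z, w), not_lt.mp hcon⟩
    · -- density
      rw [Metric.dense_iff]
      intro α r hr
      have hαF : α.val ∈ closure E := h𝓕.subset α.property
      obtain ⟨β, hβE, hdβ⟩ := Metric.mem_closure_iff.mp hαF (r/2) (half_pos hr)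
      obtain ⟨H, k, hH, hβ⟩ := hβE
      obtain ⟨γ, hγE, hdγ, hγδ⟩ :=
        exists_deltaMap_near f hNI hδ (half_pos hr) H hH k β hβ
      have hγ𝓕 : γ ∈ 𝓕 := by rw [h𝓕]; exact subset_closure hγE
      refine ⟨⟨γ, hγ𝓕⟩, ?_, fun z w h => hγδ z w h⟩
      rw [Metric.mem_ball, Subtype.dist_eq]
      calc dist γ α.val ≤ dist γ β + dist β α.val := dist_triangle _ _ _
        _ < r/2 + r/2 := add_lt_add hdγ (by rwa [dist_comm] at hdβ)
        _ = r := add_halves r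
  refine ⟨?_, hOD, ?_⟩
  · -- part (i)
    intro α hα
    rw [h𝓕] at hα
    constructor
    · have h1 : ⇑α '' Set.univ = Set.univ := by
        apply image_eq_of_mem_closure hα isCompact_univ isClosed_univ
        rintro β ⟨H, k, hH, hβ⟩
        rw [Set.image_univ, Set.range_eq_univ]
        intro y
        obtain ⟨z, hz⟩ := invLim_proj_surj (F_surj f hf hNI) k (H.symm y)
        exact ⟨z, by rw [hβ, hz, Homeomorph.apply_symm_apply]⟩
      rw [Set.image_univ] at h1
      exact Set.range_eq_univ.mp h1
    · intro t
      have hrc : Set.range (fun x : ↥(InvLim (fun x => f (x, t))) => α (iota f t x))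
          = ⇑α '' Set.range (iota f t) := Set.range_comp _ _
      rw [hrc]
      have hK : IsCompact (Set.range (iota f t)) := by
        have heq : Set.range (iota f t)
            = {z : ↥(InvLim (fun p : X × I => (f p, p.2))) | ∀ i, (z.val i).2 = t} := by
          apply Set.Subset.antisymm
          · rintro _ ⟨x, rfl⟩ i
            rfl
          · intro z hz
            have hx : ∀ i, f ((z.val (i+1)).1, t) = (z.val i).1 := by
              intro i
              have h1 : ((z.val (i+1)).1, t) = z.val (i+1) := by
                rw [← hz (i+1)]
              rw [h1]
              exact congrArg Prod.fst (z.property i)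
            refine ⟨⟨fun i => (z.val i).1, hx⟩, ?_⟩
            apply Subtype.ext
            funext i
            show ((z.val i).1, t) = z.val i
            rw [← hz i]
        rw [heq]
        have hcl : IsClosed {z : ↥(InvLim (fun p : X × I => (f p, p.2))) |
            ∀ i, (z.val i).2 = t} := by
          have h2 : {z : ↥(InvLim (fun p : X × I => (f p, p.2))) | ∀ i, (z.val i).2 = t}
              = ⋂ i, {z : ↥(InvLim (fun p : X × I => (f p, p.2))) | (z.val i).2 = t} := by
            ext z; simp [Set.mem_iInter]
          rw [h2]
          exact isClosed_iInter fun i =>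
            isClosed_eq (continuous_snd.comp
              ((continuous_apply i).comp continuous_subtype_val)) continuous_const
        exact hcl.isCompact
      apply image_eq_of_mem_closure hα hK (isClosed_univ.prod isClosed_singleton)
      rintro β ⟨H, k, hH, hβ⟩
      apply Set.Subset.antisymm
      · rintro _ ⟨_, ⟨x, rfl⟩, rfl⟩
        refine ⟨Set.mem_univ _, ?_⟩
        show (β (iota f t x)).2 ∈ ({t} : Set I)
        rw [hβ]
        exact (hH _).trans rfl
      · rintro y ⟨-, hy2⟩
        obtain ⟨p, hp⟩ := H.surjective y
        have hpt : p.2 = t := by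
          rw [← hH p, hp]
          exact hy2
        obtain ⟨x, hx⟩ := invLim_proj_surj (ft_surj f hf hNI t) k p.1
        refine ⟨iota f t x, ⟨x, rfl⟩, ?_⟩
        rw [hβ]
        show H ((x.val k, t)) = y
        rw [hx, ← hpt]
        rw [show ((p.1, p.2) : X × I) = p from rfl, hp]
  · -- part (iii)
    haveI : CompleteSpace ↥𝓕 := by
      have hcl : IsClosed 𝓕 := by rw [h𝓕]; exact isClosed_closure
      exact hcl.completeSpace_coe
    have hdense : Dense (⋂ n : ℕ,
        {α : 𝓕 | ∀ z w : InvLim (fun p : X × I => (f p, p.2)),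
          α.val z = α.val w → dInfty z.val w.val < 1 / ((n : ℝ) + 1)}) := by
      apply dense_iInter_of_isOpen
      · intro n
        exact (hOD (1 / ((n : ℝ) + 1)) (by positivity)).1
      · intro n
        exact (hOD (1 / ((n : ℝ) + 1)) (by positivity)).2
    apply hdense.mono
    intro α hα z w hzw
    by_contra hne
    have hpos := dInfty_pos_of_ne z.val w.val (fun h => hne (Subtype.ext h))
    obtain ⟨n, hn⟩ := exists_nat_gt (1 / dInfty z.val w.val)
    have h1 : 1 / ((n : ℝ) + 1) < dInfty z.val w.val := by
      rw [div_lt_iff₀ (by positivity)]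
      have h2 : 1 / dInfty z.val w.val < (n : ℝ) + 1 := by linarith
      calc (1 : ℝ) = dInfty z.val w.val * (1 / dInfty z.val w.val) := by field_simp
        _ < dInfty z.val w.val * ((n : ℝ) + 1) := mul_lt_mul_of_pos_left h2 hpos
    have h2 := Set.mem_iInter.mp hα n z w hzw
    linarith
end

section
/- Let I and X be compact metric spaces and {f_t}_{t∈I} a near-isotopy of X; write f̂_t for the natural extension of f_t on lim(X,f_t). Then for every ε > 0 there exist homeomorphisms h_t : lim(X,f_t) → X, one for each t ∈ I, such that: (a) the map X×I → X, (x,t) ↦ h_t(f̂_t(h_t^{-1}(x))), is continuous, so that {h_t ∘ f̂_t ∘ h_t^{-1}}_{t∈I} is a continuous family of homeomorphisms of X; and (b) d(h_t(x), x₀) < ε for every t ∈ I and every x = (x₀,x₁,…) ∈ lim(X,f_t). -/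
/-- The natural extension `f̂ : lim(X,f) → lim(X,f)`, `f̂(x) = (f x₀, x₀, x₁, …)`. -/
def natExt {X : Type*} (f : X → X) (x : InvLim f) : InvLim f :=
  ⟨fun i => Nat.rec (f (x.val 0)) (fun n _ => x.val n) i, fun i => by
    cases i with
    | zero => rfl
    | succ n => exact x.property n⟩

set_option linter.unusedSectionVars false

open Filter Topology

section BrownAux

variable {X I : Type*} [MetricSpace X] [CompactSpace X] [MetricSpace I] [CompactSpace I]

/-- `k`-th iterate of `f_t` -/
def iterf (f : X × I → X) : ℕ → I → X → X
  | 0, _, x => x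
  | (k+1), t, x => iterf f k t (f (x, t))

lemma iterf_succ' (f : X × I → X) (k : ℕ) (t : I) (x : X) :
    iterf f (k+1) t x = f (iterf f k t x, t) := by
  induction k generalizing x with
  | zero => rfl
  | succ k ih => exact ih (f (x, t))

lemma iterf_cont {f : X × I → X} (hf : Continuous f) :
    ∀ k, Continuous fun p : X × I => iterf f k p.2 p.1
  | 0 => continuous_fst
  | (k+1) => (iterf_cont hf (k := k)).comp (hf.prodMk continuous_snd)

lemma iterf_invlim {f : X × I → X} {q : (ℕ → X) × I}
    (hq : ∀ i, f (q.1 (i+1), q.2) = q.1 i) :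
    ∀ k i, iterf f k q.2 (q.1 (i+k)) = q.1 i
  | 0, i => rfl
  | (k+1), i => by
    have h1 : f (q.1 (i+k+1), q.2) = q.1 (i+k) := hq (i+k)
    calc iterf f (k+1) q.2 (q.1 (i+(k+1)))
        = iterf f k q.2 (f (q.1 (i+k+1), q.2)) := rfl
      _ = iterf f k q.2 (q.1 (i+k)) := by rw [h1]
      _ = q.1 i := iterf_invlim hq k i

/-- One stage of Brown's construction. -/
structure StX (X I : Type*) [MetricSpace X] [MetricSpace I] where
  n : ℕ
  g : I → X ≃ₜ X
  F : I → X ≃ₜ X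
  alpha : ℝ
  beta : ℝ
  alpha_pos : 0 < alpha
  beta_pos : 0 < beta
  contF : Continuous fun p : X × I => F p.2 p.1
  contFinv : Continuous fun p : X × I => (F p.2).symm p.1

/-- Relation between consecutive stages. -/
def GoodSt (f : X × I → X) (s s' : StX X I) : Prop :=
  s'.n = s.n + 1 ∧
  (∀ t, s'.F t = (s'.g t).trans (s.F t)) ∧
  s'.beta ≤ s.beta / 2 ∧ s'.alpha ≤ s.alpha / 2 ∧
  (∀ t y, dist (s.F t (f (y, t))) (s.F t (s'.g t y)) ≤ s'.beta) ∧
  (∀ t w, ∀ k ≤ s.n,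
      dist (iterf f k t (f ((s'.g t).symm w, t))) (iterf f k t w) ≤ s'.alpha) ∧
  (∀ t a b, dist a b ≤ 2 * s'.beta → ∀ k ≤ s.n,
      dist (iterf f k t ((s.F t).symm a)) (iterf f k t ((s.F t).symm b)) ≤ (1/2 : ℝ) ^ s.n) ∧
  (∀ t a b, dist a b ≤ 2 * s'.alpha → dist (s.F t a) (s.F t b) ≤ (1/2 : ℝ) ^ s.n)

lemma unif_single (G : X × I → X) (hG : Continuous G) {η : ℝ} (hη : 0 < η) :
    ∃ δ > (0:ℝ), ∀ t a b, dist a b ≤ δ → dist (G (a, t)) (G (b, t)) ≤ η := by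
  have h := CompactSpace.uniformContinuous_of_continuous hG
  rw [Metric.uniformContinuous_iff] at h
  obtain ⟨δ, δpos, hδ⟩ := h η hη
  refine ⟨δ/2, half_pos δpos, fun t a b hab => ?_⟩
  refine le_of_lt (hδ ?_)
  have : dist ((a,t) : X × I) (b,t) = dist a b := by
    rw [Prod.dist_eq]; simp [dist_self, max_eq_left dist_nonneg]
  rw [this]; linarith

lemma unif_family (G : ℕ → X × I → X) (hG : ∀ k, Continuous (G k)) (n : ℕ)
    {η : ℝ} (hη : 0 < η) :
    ∃ δ > (0:ℝ), ∀ k ≤ n, ∀ t a b, dist a b ≤ δ → dist (G k (a, t)) (G k (b, t)) ≤ η := by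
  induction n with
  | zero =>
    obtain ⟨δ, δp, hδ⟩ := unif_single (G 0) (hG 0) hη
    exact ⟨δ, δp, fun k hk => by rw [Nat.le_zero] at hk; subst hk; exact hδ⟩
  | succ n ih =>
    obtain ⟨δ₁, p₁, h₁⟩ := ih
    obtain ⟨δ₂, p₂, h₂⟩ := unif_single (G (n+1)) (hG (n+1)) hη
    refine ⟨min δ₁ δ₂, lt_min p₁ p₂, fun k hk t a b hab => ?_⟩
    rcases Nat.lt_succ_iff_lt_or_eq.mp (Nat.lt_succ_of_le hk) with h | h
    · exact h₁ k (Nat.lt_succ_iff.mp h) t a b (hab.trans (min_le_left _ _))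
    · subst h; exact h₂ t a b (hab.trans (min_le_right _ _))

lemma cont_symm (g : I → X ≃ₜ X) (hg : Continuous fun p : X × I => g p.2 p.1) :
    Continuous fun p : X × I => (g p.2).symm p.1 := by
  let e : X × I ≃ X × I :=
    { toFun := fun p => (g p.2 p.1, p.2)
      invFun := fun p => ((g p.2).symm p.1, p.2)
      left_inv := fun p => by simp
      right_inv := fun p => by simp }
  have hc : Continuous e := hg.prodMk continuous_snd
  have hsymm : Continuous e.symm := hc.continuous_symm_of_equiv_compact_to_t2
  exact hsymm.fst

lemma dist_lim_le {Y : Type*} [PseudoMetricSpace Y] {a : ℕ → Y} {L : Y}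
    (hL : Tendsto a atTop (𝓝 L)) {B : ℕ → ℝ}
    (hB : ∀ k, B (k+1) ≤ B k / 2) (hd : ∀ k, dist (a k) (a (k+1)) ≤ B k) (m : ℕ) :
    dist (a m) L ≤ 2 * B m := by
  have hnn : ∀ k, (0:ℝ) ≤ B k := fun k => le_trans dist_nonneg (hd k)
  have key : ∀ n, dist (a m) (a (m+n)) + 2 * B (m+n) ≤ 2 * B m := by
    intro n
    induction n with
    | zero => simp
    | succ n ih =>
      have h1 := hd (m+n)
      have h2 := hB (m+n)
      have h3 := dist_triangle (a m) (a (m+n)) (a (m+n+1))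
      have : m + (n+1) = (m+n) + 1 := rfl
      rw [this]
      linarith
  have h2 : Tendsto (fun n => a (m+n)) atTop (𝓝 L) := by
    have := hL.comp (tendsto_add_atTop_nat m)
    simpa [Function.comp_def, Nat.add_comm] using this
  have h3 : Tendsto (fun n => dist (a m) (a (m+n))) atTop (𝓝 (dist (a m) L)) :=
    tendsto_const_nhds.dist h2
  exact le_of_tendsto h3 (Eventually.of_forall fun n => by
    have := key n; have := hnn (m+n); linarith)

lemma step_ex (f : X × I → X) (hf : Continuous f)
    (hNI : ∀ ε > (0 : ℝ), ∃ h : I → X ≃ₜ X,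
        Continuous (fun p : X × I => h p.2 p.1) ∧
        ∀ p : X × I, dist (h p.2 p.1) (f p) < ε)
    (s : StX X I) : ∃ s', GoodSt f s s' := by
  obtain ⟨ρ, ρpos, hρ⟩ := unif_single (fun p : X × I => s.F p.2 p.1) s.contF
    (η := (1/2 : ℝ) ^ s.n) (by positivity)
  obtain ⟨σ, σpos, hσ⟩ := unif_family
    (fun k (p : X × I) => iterf f k p.2 ((s.F p.2).symm p.1))
    (fun k => (iterf_cont hf k).comp (s.contFinv.prodMk continuous_snd)) s.n
    (η := (1/2 : ℝ) ^ s.n) (by positivity)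
  set α' : ℝ := min (s.alpha/2) (ρ/2) with hα'
  set β' : ℝ := min (s.beta/2) (σ/2) with hβ'
  have α'pos : 0 < α' := lt_min (half_pos s.alpha_pos) (half_pos ρpos)
  have β'pos : 0 < β' := lt_min (half_pos s.beta_pos) (half_pos σpos)
  obtain ⟨δA, δApos, hδA⟩ := unif_single (fun p : X × I => s.F p.2 p.1) s.contF β'pos
  obtain ⟨δB, δBpos, hδB⟩ := unif_family (fun k (p : X × I) => iterf f k p.2 p.1)
    (iterf_cont hf) s.n α'pos
  obtain ⟨g, hgcont, hgclose⟩ := hNI (min δA δB) (lt_min δApos δBpos)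
  refine ⟨⟨s.n+1, g, fun t => (g t).trans (s.F t), α', β', α'pos, β'pos,
    s.contF.comp (hgcont.prodMk continuous_snd),
    (cont_symm g hgcont).comp (s.contFinv.prodMk continuous_snd)⟩,
    rfl, fun t => rfl, min_le_left _ _, min_le_left _ _, ?_, ?_, ?_, ?_⟩
  · intro t y
    refine hδA t (f (y, t)) (g t y) ?_
    have := hgclose (y, t)
    rw [dist_comm] at this
    exact le_of_lt (lt_of_lt_of_le this (min_le_left _ _))
  · intro t w k hk
    have h1 := hgclose ((g t).symm w, t)
    rw [Homeomorph.apply_symm_apply] at h1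
    rw [dist_comm] at h1
    exact hδB k hk t _ _ (le_of_lt (lt_of_lt_of_le h1 (min_le_right _ _)))
  · intro t a b hab k hk
    have hab' : dist a b ≤ σ := le_trans hab (by
      have : β' ≤ σ/2 := min_le_right _ _
      linarith)
    exact hσ k hk t a b hab'
  · intro t a b hab
    refine hρ t a b (le_trans hab ?_)
    have : α' ≤ ρ/2 := min_le_right _ _
    linarith

end BrownAux
/-- Parameterized Brown corollary: for a near-isotopy `{f_t}_{t∈I}` of a compact metric
space `X` and any `ε > 0`, there are homeomorphisms `h_t : lim(X,f_t) → X` such that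
`(x,t) ↦ h_t (f̂_t (h_t⁻¹ x))` is continuous (so `{h_t ∘ f̂_t ∘ h_t⁻¹}` is a continuous
family of homeomorphisms of `X`), and `dist (h_t x) x₀ < ε` for every `t` and every
`x = (x₀,x₁,…) ∈ lim(X,f_t)`. -/
theorem parameterized_brown_corollary {X I : Type*}
    [MetricSpace X] [CompactSpace X] [MetricSpace I] [CompactSpace I]
    (f : X × I → X) (hf : Continuous f)
    (hNI : ∀ ε > (0 : ℝ), ∃ h : I → X ≃ₜ X,
        Continuous (fun p : X × I => h p.2 p.1) ∧
        ∀ p : X × I, dist (h p.2 p.1) (f p) < ε)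
    (ε : ℝ) (hε : 0 < ε) :
    ∃ h : (t : I) → (InvLim (fun x => f (x, t)) ≃ₜ X),
      Continuous (fun p : X × I =>
        h p.2 (natExt (fun x => f (x, p.2)) ((h p.2).symm p.1))) ∧
      ∀ (t : I) (x : InvLim (fun x => f (x, t))), dist (h t x) (x.val 0) < ε := by
  classical
  let base : StX X I :=
    { n := 0, g := fun _ => Homeomorph.refl X, F := fun _ => Homeomorph.refl X
      alpha := 1, beta := ε/4, alpha_pos := one_pos, beta_pos := by positivity
      contF := by exact continuous_fst, contFinv := by exact continuous_fst }
  let c : ℕ → StX X I := fun n => Nat.rec base (fun _ s => (step_ex f hf hNI s).choose) n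
  have hcg : ∀ n, GoodSt f (c n) (c (n+1)) := fun n => (step_ex f hf hNI (c n)).choose_spec
  have hn : ∀ n, (c n).n = n := by
    intro n; induction n with
    | zero => rfl
    | succ n ih => rw [(hcg n).1, ih]
  have hFsucc : ∀ n t, (c (n+1)).F t = ((c (n+1)).g t).trans ((c n).F t) := fun n => (hcg n).2.1
  have hβhalf : ∀ n, (c (n+1)).beta ≤ (c n).beta / 2 := fun n => (hcg n).2.2.1
  have hαhalf : ∀ n, (c (n+1)).alpha ≤ (c n).alpha / 2 := fun n => (hcg n).2.2.2.1
  have hU1 : ∀ n t y, dist ((c n).F t (f (y, t))) ((c n).F t ((c (n+1)).g t y)) ≤ (c (n+1)).beta :=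
    fun n => (hcg n).2.2.2.2.1
  have hU2 : ∀ n t w, ∀ k ≤ (c n).n,
      dist (iterf f k t (f (((c (n+1)).g t).symm w, t))) (iterf f k t w) ≤ (c (n+1)).alpha :=
    fun n => (hcg n).2.2.2.2.2.1
  have hU3 : ∀ n t a b, dist a b ≤ 2 * (c (n+1)).beta → ∀ k ≤ (c n).n,
      dist (iterf f k t (((c n).F t).symm a)) (iterf f k t (((c n).F t).symm b))
        ≤ (1/2 : ℝ) ^ (c n).n :=
    fun n => (hcg n).2.2.2.2.2.2.1
  have hU4 : ∀ n t a b, dist a b ≤ 2 * (c (n+1)).alpha →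
      dist ((c n).F t a) ((c n).F t b) ≤ (1/2 : ℝ) ^ (c n).n := fun n => (hcg n).2.2.2.2.2.2.2
  have hβ0 : (c 0).beta = ε/4 := rfl
  have hα0 : (c 0).alpha = 1 := rfl
  have hβgeo : ∀ n, (c n).beta ≤ (ε/4) * (1/2)^n := by
    intro n; induction n with
    | zero => simp [hβ0]
    | succ n ih =>
      have h1 := hβhalf n
      have h2 : (ε/4) * (1/2:ℝ)^(n+1) = ((ε/4) * (1/2)^n)/2 := by rw [pow_succ]; ring
      rw [h2]; linarith
  have hαgeo : ∀ n, (c n).alpha ≤ (1/2:ℝ)^n := by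
    intro n; induction n with
    | zero => simp [hα0]
    | succ n ih =>
      have h1 := hαhalf n
      have h2 : (1/2:ℝ)^(n+1) = ((1/2:ℝ)^n)/2 := by rw [pow_succ]; ring
      rw [h2]; linarith
  have pow_half : Filter.Tendsto (fun n : ℕ => (1/2:ℝ)^n) Filter.atTop (nhds 0) :=
    tendsto_pow_atTop_nhds_zero_of_lt_one (by norm_num) (by norm_num)
  -- the map Φ
  let u : ℕ → ((ℕ → X) × I) → X := fun n q => (c n).F q.2 (q.1 n)
  have hu_incr : ∀ (q : (ℕ → X) × I), (∀ i, f (q.1 (i+1), q.2) = q.1 i) →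
      ∀ k, dist (u k q) (u (k+1) q) ≤ (c (k+1)).beta := by
    intro q hq k
    have h1 : u (k+1) q = (c k).F q.2 ((c (k+1)).g q.2 (q.1 (k+1))) := by
      show (c (k+1)).F q.2 (q.1 (k+1)) = _
      rw [hFsucc k q.2]; rfl
    have h2 : u k q = (c k).F q.2 (f (q.1 (k+1), q.2)) := by
      show (c k).F q.2 (q.1 k) = _
      rw [hq k]
    rw [h1, h2]
    exact hU1 k q.2 (q.1 (k+1))
  have hΦex : ∀ q : {q : (ℕ → X) × I // ∀ i, f (q.1 (i+1), q.2) = q.1 i},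
      ∃ L, Filter.Tendsto (fun n => u n q.1) Filter.atTop (nhds L) := by
    intro q
    refine cauchySeq_tendsto_of_complete ?_
    refine cauchySeq_of_le_geometric (1/2 : ℝ) (ε/4) (by norm_num) ?_
    intro n
    refine (hu_incr q.1 q.2 n).trans ((hβgeo (n+1)).trans ?_)
    have hp := pow_pos (by norm_num : (0:ℝ) < 1/2) n
    rw [pow_succ]
    nlinarith
  choose Φ hΦ using hΦex
  have hΦbound : ∀ q m, dist (u m q.1) (Φ q) ≤ 2 * (c (m+1)).beta := by
    intro q m
    exact dist_lim_le (hΦ q) (B := fun k => (c (k+1)).beta)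
      (fun k => hβhalf (k+1)) (fun k => hu_incr q.1 q.2 k) m
  have hΦcont : Continuous Φ := by
    have hTU : TendstoUniformly (fun n q => u n q.1) Φ Filter.atTop := by
      rw [Metric.tendstoUniformly_iff]
      intro η ηpos
      have ht : Filter.Tendsto (fun n : ℕ => ε * (1/2:ℝ)^n) Filter.atTop (nhds 0) := by
        simpa using pow_half.const_mul ε
      filter_upwards [ht.eventually (gt_mem_nhds ηpos)] with n hn q
      rw [dist_comm]
      refine lt_of_le_of_lt ((hΦbound q n).trans ?_) hn
      have h1 := hβgeo (n+1)
      have hp := pow_pos (by norm_num : (0:ℝ) < 1/2) n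
      rw [pow_succ] at h1
      nlinarith
    refine hTU.continuous (Filter.Frequently.of_forall fun n => ?_)
    show Continuous fun q : {q : (ℕ → X) × I // ∀ i, f (q.1 (i+1), q.2) = q.1 i} =>
      (c n).F q.1.2 (q.1.1 n)
    have hq : Continuous fun q : {q : (ℕ → X) × I // ∀ i, f (q.1 (i+1), q.2) = q.1 i} =>
        ((q.1.1 n, q.1.2) : X × I) :=
      ((continuous_apply n).comp (continuous_fst.comp continuous_subtype_val)).prodMk
        (continuous_snd.comp continuous_subtype_val)
    exact (c n).contF.comp hq
  -- the map Ψ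
  let v : ℕ → ℕ → X × I → X := fun i n p => iterf f n p.2 (((c (n+i)).F p.2).symm p.1)
  have hv_incr : ∀ i n p, dist (v i n p) (v i (n+1) p) ≤ (c (n+i+1)).alpha := by
    intro i n p
    have e1 : v i (n+1) p =
        iterf f n p.2 (f (((c (n+i+1)).g p.2).symm (((c (n+i)).F p.2).symm p.1), p.2)) := by
      show iterf f (n+1) p.2 (((c (n+1+i)).F p.2).symm p.1) = _
      have hidx : n+1+i = (n+i)+1 := by omega
      rw [hidx, hFsucc (n+i) p.2]
      rfl
    have h2 := hU2 (n+i) p.2 (((c (n+i)).F p.2).symm p.1) n (by rw [hn (n+i)]; omega)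
    rw [e1, dist_comm]
    exact h2
  have hΨex : ∀ i (p : X × I), ∃ L, Filter.Tendsto (fun n => v i n p) Filter.atTop (nhds L) := by
    intro i p
    refine cauchySeq_tendsto_of_complete ?_
    refine cauchySeq_of_le_geometric (1/2 : ℝ) 1 (by norm_num) ?_
    intro n
    refine (hv_incr i n p).trans ((hαgeo (n+i+1)).trans ?_)
    rw [one_mul]
    exact pow_le_pow_of_le_one (by norm_num) (by norm_num) (by omega)
  choose Ψ hΨ using hΨex
  have hΨbound : ∀ i p m, dist (v i m p) (Ψ i p) ≤ 2 * (c (m+i+1)).alpha := by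
    intro i p m
    refine dist_lim_le (hΨ i p) (B := fun k => (c (k+i+1)).alpha) (fun k => ?_)
      (fun k => hv_incr i k p) m
    show (c (k+1+i+1)).alpha ≤ (c (k+i+1)).alpha / 2
    have hidx : k+1+i+1 = (k+i+1)+1 := by omega
    rw [hidx]
    exact hαhalf (k+i+1)
  have hΨcont : ∀ i, Continuous (Ψ i) := by
    intro i
    have hTU : TendstoUniformly (fun n p => v i n p) (Ψ i) Filter.atTop := by
      rw [Metric.tendstoUniformly_iff]
      intro η ηpos
      filter_upwards [pow_half.eventually (gt_mem_nhds ηpos)] with n hn p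
      rw [dist_comm]
      refine lt_of_le_of_lt ((hΨbound i p n).trans ?_) hn
      have h1 := hαgeo (n+i+1)
      have h2 : ((1:ℝ)/2)^(n+i+1) ≤ (1/2:ℝ)^(n+1) :=
        pow_le_pow_of_le_one (by norm_num) (by norm_num) (by omega)
      have h3 : (1/2:ℝ)^(n+1) = (1/2:ℝ)^n * (1/2) := pow_succ _ _
      linarith
    refine hTU.continuous (Filter.Frequently.of_forall fun n => ?_)
    exact (iterf_cont hf n).comp ((c (n+i)).contFinv.prodMk continuous_snd)
  -- Ψ lands in the inverse limit
  have hΨmem : ∀ p : X × I, ∀ i, f (Ψ (i+1) p, p.2) = Ψ i p := by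
    intro p i
    have h2 : (fun n => f (v (i+1) n p, p.2)) = fun n => v i (n+1) p := by
      funext n
      show f (iterf f n p.2 (((c (n+(i+1))).F p.2).symm p.1), p.2)
        = iterf f (n+1) p.2 (((c (n+1+i)).F p.2).symm p.1)
      rw [iterf_succ']
      have hidx : n+1+i = n+(i+1) := by omega
      rw [hidx]
    have h1 : Filter.Tendsto (fun n => f (v (i+1) n p, p.2)) Filter.atTop
        (nhds (f (Ψ (i+1) p, p.2))) :=
      (hf.tendsto _).comp ((hΨ (i+1) p).prodMk_nhds tendsto_const_nhds)
    rw [h2] at h1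
    have h3 : Filter.Tendsto (fun n => v i (n+1) p) Filter.atTop (nhds (Ψ i p)) :=
      (hΨ i p).comp (Filter.tendsto_add_atTop_nat 1)
    exact tendsto_nhds_unique h1 h3
  -- right inverse : Φ ∘ Ψ = id
  have hright : ∀ (z : X) (t : I)
      (hq : ∀ i, f ((fun j => Ψ j (z,t)) (i+1), t) = (fun j => Ψ j (z,t)) i),
      Φ ⟨(fun j => Ψ j (z,t), t), hq⟩ = z := by
    intro z t hq
    set q' : {q : (ℕ → X) × I // ∀ i, f (q.1 (i+1), q.2) = q.1 i} :=
      ⟨(fun j => Ψ j (z,t), t), hq⟩ with hq'def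
    have key : ∀ n, dist (Φ q') z ≤ (ε/4 + 1) * (1/2)^n := by
      intro n
      have b1 : dist (u n q'.1) (Φ q') ≤ 2 * (c (n+1)).beta := hΦbound q' n
      have hv0 : v n 0 (z,t) = ((c n).F t).symm z := by
        show ((c (0+n)).F t).symm z = _
        rw [Nat.zero_add]
      have b2 : dist (Ψ n (z,t)) (((c n).F t).symm z) ≤ 2 * (c (n+1)).alpha := by
        have h := hΨbound n (z,t) 0
        rw [hv0] at h
        have hidx : 0+n+1 = n+1 := by omega
        rw [hidx] at h
        rw [dist_comm]
        exact h
      have b3 := hU4 n t (Ψ n (z,t)) (((c n).F t).symm z) b2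
      rw [Homeomorph.apply_symm_apply, hn n] at b3
      have hu' : u n q'.1 = (c n).F t (Ψ n (z,t)) := rfl
      rw [hu'] at b1
      have tri := dist_triangle (Φ q') ((c n).F t (Ψ n (z,t))) z
      rw [dist_comm (Φ q') ((c n).F t (Ψ n (z,t)))] at tri
      have hb := hβgeo (n+1)
      rw [pow_succ] at hb
      have hp := pow_pos (by norm_num : (0:ℝ) < 1/2) n
      nlinarith
    have ht : Filter.Tendsto (fun n : ℕ => (ε/4+1) * (1/2:ℝ)^n) Filter.atTop (nhds 0) := by
      simpa using pow_half.const_mul (ε/4+1)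
    have hle : dist (Φ q') z ≤ 0 := ge_of_tendsto' ht key
    exact dist_le_zero.mp hle
  -- left inverse : Ψ ∘ Φ = id
  have hleft : ∀ (q : {q : (ℕ → X) × I // ∀ i, f (q.1 (i+1), q.2) = q.1 i}) (i : ℕ),
      Ψ i (Φ q, q.1.2) = q.1.1 i := by
    intro q i
    have hb : ∀ n, dist (v i n (Φ q, q.1.2)) (q.1.1 i) ≤ (1/2:ℝ)^n := by
      intro n
      have h1 : dist (Φ q) (u (n+i) q.1) ≤ 2 * (c (n+i+1)).beta := by
        rw [dist_comm]; exact hΦbound q (n+i)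
      have h2 := hU3 (n+i) q.1.2 (Φ q) (u (n+i) q.1) h1 n (by rw [hn]; omega)
      rw [hn] at h2
      have h3 : (((c (n+i)).F q.1.2).symm (u (n+i) q.1)) = q.1.1 (n+i) := by
        show (((c (n+i)).F q.1.2).symm ((c (n+i)).F q.1.2 (q.1.1 (n+i)))) = _
        exact Homeomorph.symm_apply_apply _ _
      rw [h3] at h2
      have h4 : iterf f n q.1.2 (q.1.1 (n+i)) = q.1.1 i := by
        have h5 := iterf_invlim q.2 n i
        rwa [Nat.add_comm i n] at h5
      rw [h4] at h2
      exact h2.trans (pow_le_pow_of_le_one (by norm_num) (by norm_num) (by omega))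
    have h5 : Filter.Tendsto (fun n => dist (v i n (Φ q, q.1.2)) (q.1.1 i))
        Filter.atTop (nhds 0) :=
      squeeze_zero (fun n => dist_nonneg) hb pow_half
    have h6 : Filter.Tendsto (fun n => v i n (Φ q, q.1.2)) Filter.atTop (nhds (q.1.1 i)) :=
      tendsto_iff_dist_tendsto_zero.mpr h5
    exact tendsto_nhds_unique (hΨ i (Φ q, q.1.2)) h6
  -- assemble the homeomorphisms
  have hmem : ∀ (z : X) (t : I), (fun j => Ψ j (z, t)) ∈ InvLim (fun x => f (x, t)) :=
    fun z t i => hΨmem (z, t) i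
  have hleftinv : ∀ t : I, Function.LeftInverse
      (fun z => (⟨fun j => Ψ j (z,t), hmem z t⟩ : InvLim (fun x => f (x,t))))
      (fun x : InvLim (fun x => f (x,t)) => Φ ⟨(x.1, t), x.2⟩) := by
    intro t x
    apply Subtype.ext
    funext i
    exact hleft ⟨(x.1, t), x.2⟩ i
  have hrightinv : ∀ t : I, Function.RightInverse
      (fun z => (⟨fun j => Ψ j (z,t), hmem z t⟩ : InvLim (fun x => f (x,t))))
      (fun x : InvLim (fun x => f (x,t)) => Φ ⟨(x.1, t), x.2⟩) :=
    fun t z => hright z t (hmem z t)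
  have hcontTo : ∀ t : I, Continuous
      (fun x : InvLim (fun x => f (x,t)) => Φ ⟨(x.1, t), x.2⟩) := by
    intro t
    exact hΦcont.comp (Continuous.subtype_mk
      (continuous_subtype_val.prodMk continuous_const) (fun x => x.2))
  have hcontInv : ∀ t : I, Continuous
      (fun z : X => (⟨fun j => Ψ j (z,t), hmem z t⟩ : InvLim (fun x => f (x,t)))) := by
    intro t
    refine Continuous.subtype_mk ?_ _
    refine continuous_pi fun j => ?_
    exact (hΨcont j).comp (continuous_id.prodMk continuous_const)
  refine ⟨fun t => ⟨⟨fun x => Φ ⟨(x.1, t), x.2⟩,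
    fun z => ⟨fun j => Ψ j (z,t), hmem z t⟩, hleftinv t, hrightinv t⟩,
    hcontTo t, hcontInv t⟩, ?_, ?_⟩
  · -- continuity of the conjugated family
    have hmemD : ∀ p : X × I, ∀ i,
        f ((fun j => Nat.rec (f (Ψ 0 p, p.2)) (fun m _ => Ψ m p) j) (i+1), p.2)
          = (fun j => Nat.rec (f (Ψ 0 p, p.2)) (fun m _ => Ψ m p) j) i := by
      intro p i
      cases i with
      | zero => rfl
      | succ m => exact hΨmem p m
    have hsub : Continuous (fun p : X × I =>
        (⟨((fun j => Nat.rec (f (Ψ 0 p, p.2)) (fun m _ => Ψ m p) j : ℕ → X), p.2), hmemD p⟩ :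
          {q : (ℕ → X) × I // ∀ i, f (q.1 (i+1), q.2) = q.1 i})) := by
      refine Continuous.subtype_mk ?_ _
      refine Continuous.prodMk ?_ continuous_snd
      refine continuous_pi fun j => ?_
      cases j with
      | zero => exact hf.comp ((hΨcont 0).prodMk continuous_snd)
      | succ m => exact hΨcont m
    exact hΦcont.comp hsub
  · -- distance estimate
    intro t x
    show dist (Φ ⟨(x.1, t), x.2⟩) (x.1 0) < ε
    have h1 : dist (u 0 ((⟨(x.1, t), x.2⟩ :
        {q : (ℕ → X) × I // ∀ i, f (q.1 (i+1), q.2) = q.1 i}).1)) (Φ ⟨(x.1, t), x.2⟩)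
        ≤ 2 * (c 1).beta := hΦbound ⟨(x.1, t), x.2⟩ 0
    have h2 : u 0 ((⟨(x.1, t), x.2⟩ :
        {q : (ℕ → X) × I // ∀ i, f (q.1 (i+1), q.2) = q.1 i}).1) = x.1 0 := rfl
    rw [h2] at h1
    have h3 : (c 1).beta ≤ (c 0).beta / 2 := hβhalf 0
    have h4 : (c 0).beta = ε/4 := rfl
    rw [dist_comm] at h1
    rw [h4] at h3
    linarith
end

section
/- (Brown's theorem with control.) If f : X → X is a near-homeomorphism of a compact metric space X, then for every ε > 0 there exists a homeomorphism β : lim(X,f) → X with sup_{x ∈ lim(X,f)} d(β(x), x₀) < ε. In particular, lim(X,f) is homeomorphic to X. -/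
open Filter Topology

namespace BrownCtrl

variable {X : Type*} [MetricSpace X] [CompactSpace X]

lemma exists_homeo (f : C(X,X)) (hf : f ∈ closure {g : C(X, X) | ∃ e : X ≃ₜ X, ⇑e = ⇑g})
    {δ : ℝ} (hδ : 0 < δ) : ∃ e : X ≃ₜ X, ∀ x, dist (e x) (f x) ≤ δ := by
  rcases Metric.mem_closure_iff.mp hf δ hδ with ⟨g, hg, hdist⟩
  obtain ⟨e, he⟩ := hg
  refine ⟨e, fun x => ?_⟩
  have h1 : dist (g x) (f x) ≤ dist f g := by
    rw [dist_comm]; exact ContinuousMap.dist_apply_le_dist x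
  have : (e : X → X) x = g x := congrFun he x
  rw [this]
  linarith

lemma exists_modulus (f : C(X,X)) (n : ℕ) (G : ℕ → X ≃ₜ X) {t : ℝ} (ht : 0 < t) :
    ∃ η > 0, ∀ a j l, a ≤ n → j ≤ n → l ≤ n → ∀ x y : X, dist x y ≤ η →
      dist ((⇑f)^[a] ((G j).symm (G l x))) ((⇑f)^[a] ((G j).symm (G l y))) ≤ t := by
  set Φ : X → (Fin (n+1) × Fin (n+1) × Fin (n+1) → X) :=
    fun x q => (⇑f)^[(q.1 : ℕ)] ((G q.2.1).symm (G q.2.2 x)) with hΦ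
  have hc : Continuous Φ := continuous_pi fun q =>
    (f.continuous.iterate _).comp ((G q.2.1).symm.continuous.comp (G q.2.2).continuous)
  have hu := CompactSpace.uniformContinuous_of_continuous hc
  rcases Metric.uniformContinuous_iff.mp hu t ht with ⟨η, hη, h⟩
  refine ⟨η/2, by positivity, fun a j l ha hj hl x y hxy => ?_⟩
  have hlt : dist x y < η := by linarith
  have h2 := h hlt
  have h3 := dist_le_pi_dist (Φ x) (Φ y)
    ⟨⟨a, Nat.lt_succ_of_le ha⟩, ⟨j, Nat.lt_succ_of_le hj⟩, ⟨l, Nat.lt_succ_of_le hl⟩⟩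
  exact h3.trans h2.le

variable (f : C(X,X))

/-- One-step spec for the recursive choice. -/
def Q (n : ℕ) (s : {d : ℝ // 0 < d} × (ℕ → X ≃ₜ X)) (p : {d : ℝ // 0 < d} × (X ≃ₜ X)) : Prop :=
  p.1.1 ≤ s.1.1 / 2 ∧ (∀ x, dist (p.2 x) (f x) ≤ p.1.1) ∧
  ∀ a j l, a ≤ n → j ≤ n → l ≤ n → ∀ x y : X, dist x y ≤ p.1.1 →
    dist ((⇑f)^[a] ((s.2 j).symm (s.2 l x))) ((⇑f)^[a] ((s.2 j).symm (s.2 l y))) ≤ s.1.1 / 2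

lemma exQ (hf : f ∈ closure {g : C(X, X) | ∃ e : X ≃ₜ X, ⇑e = ⇑g})
    (n : ℕ) (s : {d : ℝ // 0 < d} × (ℕ → X ≃ₜ X)) : ∃ p, Q f n s p := by
  obtain ⟨η, hη, hmod⟩ := exists_modulus f n s.2 (half_pos s.1.2)
  have hδ' : 0 < min (s.1.1/2) η := lt_min (half_pos s.1.2) hη
  obtain ⟨e, he⟩ := exists_homeo f hf hδ'
  exact ⟨⟨⟨_, hδ'⟩, e⟩, min_le_left _ _, he, fun a j l ha hj hl x y hxy =>
    hmod a j l ha hj hl x y (hxy.trans (min_le_right _ _))⟩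

variable (hf : f ∈ closure {g : C(X, X) | ∃ e : X ≃ₜ X, ⇑e = ⇑g}) (ε : ℝ) (hε : 0 < ε)

noncomputable def S : ℕ → {d : ℝ // 0 < d} × (ℕ → X ≃ₜ X)
  | 0 => ⟨⟨ε/2, half_pos hε⟩, fun _ => Homeomorph.refl X⟩
  | (n+1) =>
    let s := S n
    let p := (exQ f hf n s).choose
    ⟨p.1, fun j => if j ≤ n then s.2 j else p.2.trans (s.2 n)⟩

noncomputable def del (n : ℕ) : ℝ := (S f hf ε hε n).1.1

noncomputable def g (n : ℕ) : X ≃ₜ X := (S f hf ε hε n).2 n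

noncomputable def E (n : ℕ) : X ≃ₜ X := (exQ f hf n (S f hf ε hε n)).choose.2

lemma hQ (n : ℕ) : Q f n (S f hf ε hε n) ((exQ f hf n (S f hf ε hε n)).choose) :=
  (exQ f hf n (S f hf ε hε n)).choose_spec

lemma del_pos (n : ℕ) : 0 < del f hf ε hε n := (S f hf ε hε n).1.2

lemma del_zero : del f hf ε hε 0 = ε/2 := rfl

lemma del_succ (n : ℕ) : del f hf ε hε (n+1) ≤ del f hf ε hε n / 2 := (hQ f hf ε hε n).1

lemma hE (n : ℕ) (x : X) : dist (E f hf ε hε n x) (f x) ≤ del f hf ε hε (n+1) :=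
  (hQ f hf ε hε n).2.1 x

lemma stab : ∀ n j, j ≤ n → (S f hf ε hε n).2 j = g f hf ε hε j := by
  intro n
  induction n with
  | zero => intro j hj; interval_cases j; rfl
  | succ n ih =>
    intro j hj
    rcases Nat.lt_or_ge j (n+1) with h | h
    · have hj' : j ≤ n := Nat.lt_succ_iff.mp h
      have : (S f hf ε hε (n+1)).2 j = (S f hf ε hε n).2 j := by
        show (if j ≤ n then (S f hf ε hε n).2 j else _) = _
        simp [hj']
      rw [this, ih j hj']
    · have : j = n+1 := le_antisymm hj h
      subst this; rfl

lemma g_zero : g f hf ε hε 0 = Homeomorph.refl X := rfl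

lemma g_succ (n : ℕ) (x : X) :
    g f hf ε hε (n+1) x = g f hf ε hε n (E f hf ε hε n x) := by
  show (if n+1 ≤ n then _ else (E f hf ε hε n).trans ((S f hf ε hε n).2 n)) x = _
  simp only [Nat.succ_le_iff, lt_irrefl, if_false]
  rfl

lemma g_succ_symm (n : ℕ) (y : X) :
    (g f hf ε hε (n+1)).symm y = (E f hf ε hε n).symm ((g f hf ε hε n).symm y) := by
  show ((if n+1 ≤ n then _ else (E f hf ε hε n).trans ((S f hf ε hε n).2 n)) : X ≃ₜ X).symm y = _
  simp only [Nat.succ_le_iff, lt_irrefl, if_false]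
  rfl

lemma hW (n : ℕ) (a j l : ℕ) (ha : a ≤ n) (hj : j ≤ n) (hl : l ≤ n) (x y : X)
    (hxy : dist x y ≤ del f hf ε hε (n+1)) :
    dist ((⇑f)^[a] ((g f hf ε hε j).symm (g f hf ε hε l x)))
      ((⇑f)^[a] ((g f hf ε hε j).symm (g f hf ε hε l y))) ≤ del f hf ε hε n / 2 := by
  have := (hQ f hf ε hε n).2.2 a j l ha hj hl x y hxy
  rwa [stab f hf ε hε n j hj, stab f hf ε hε n l hl] at this


lemma del_anti : ∀ {m n : ℕ}, m ≤ n → del f hf ε hε n ≤ del f hf ε hε m := by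
  intro m n h
  induction n, h using Nat.le_induction with
  | base => exact le_refl _
  | succ n hn ih =>
    have h1 := del_succ f hf ε hε n
    have h2 := del_pos f hf ε hε n
    linarith

lemma del_tendsto : Tendsto (del f hf ε hε) atTop (𝓝 0) := by
  have hgeo : ∀ n, del f hf ε hε n ≤ (ε/2) * (1/2)^n := by
    intro n
    induction n with
    | zero => simp [del_zero]
    | succ n ih =>
      have h1 := del_succ f hf ε hε n
      have : (ε/2) * (1/2)^(n+1) = ((ε/2) * (1/2)^n)/2 := by ring
      rw [this]
      linarith
  have hlim : Tendsto (fun n : ℕ => (ε/2) * (1/2)^n) atTop (𝓝 0) := by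
    have := tendsto_pow_atTop_nhds_zero_of_lt_one (by norm_num : (0:ℝ) ≤ 1/2)
      (by norm_num : (1:ℝ)/2 < 1)
    simpa using this.const_mul (ε/2)
  exact squeeze_zero (fun n => (del_pos f hf ε hε n).le) hgeo hlim

section Thread

variable (x : ℕ → X) (hx : ∀ i, f (x (i+1)) = x i)

include hx

lemma estA : ∀ m n, m ≤ n →
    dist (g f hf ε hε n (x n)) (g f hf ε hε m (x m)) ≤ del f hf ε hε m - del f hf ε hε n := by
  intro m n h
  induction n, h using Nat.le_induction with
  | base => simp
  | succ n hn ih =>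
    have step : dist (g f hf ε hε (n+1) (x (n+1))) (g f hf ε hε n (x n)) ≤ del f hf ε hε n / 2 := by
      have h1 : g f hf ε hε (n+1) (x (n+1)) = g f hf ε hε n (E f hf ε hε n (x (n+1))) :=
        g_succ f hf ε hε n _
      have h2 : g f hf ε hε n (x n) = g f hf ε hε n (f (x (n+1))) := by rw [hx n]
      rw [h1, h2]
      have h3 : dist (E f hf ε hε n (x (n+1))) (f (x (n+1))) ≤ del f hf ε hε (n+1) :=
        hE f hf ε hε n _
      have := hW f hf ε hε n 0 0 n (Nat.zero_le n) (Nat.zero_le n) le_rfl _ _ h3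
      simpa [g_zero] using this
    have h4 := del_succ f hf ε hε n
    calc dist (g f hf ε hε (n+1) (x (n+1))) (g f hf ε hε m (x m))
        ≤ dist (g f hf ε hε (n+1) (x (n+1))) (g f hf ε hε n (x n))
          + dist (g f hf ε hε n (x n)) (g f hf ε hε m (x m)) := dist_triangle _ _ _
      _ ≤ del f hf ε hε m - del f hf ε hε (n+1) := by linarith

lemma cauchyA : CauchySeq (fun n => g f hf ε hε n (x n)) := by
  refine cauchySeq_of_le_tendsto_0 (del f hf ε hε) (fun n m N hn hm => ?_) (del_tendsto f hf ε hε)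
  rcases le_total n m with h | h
  · rw [dist_comm]
    have := estA f hf ε hε x hx n m h
    have h2 := del_pos f hf ε hε m
    have h3 := del_anti f hf ε hε hn
    linarith
  · have := estA f hf ε hε x hx m n h
    have h2 := del_pos f hf ε hε n
    have h3 := del_anti f hf ε hε hm
    linarith

noncomputable def beta : X :=
  (cauchySeq_tendsto_of_complete (cauchyA f hf ε hε x hx)).choose

lemma beta_tendsto :
    Tendsto (fun n => g f hf ε hε n (x n)) atTop (𝓝 (beta f hf ε hε x hx)) :=
  (cauchySeq_tendsto_of_complete (cauchyA f hf ε hε x hx)).choose_spec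

lemma dist_beta_g (m : ℕ) :
    dist (beta f hf ε hε x hx) (g f hf ε hε m (x m)) ≤ del f hf ε hε m := by
  have h1 : Tendsto (fun n => dist (g f hf ε hε n (x n)) (g f hf ε hε m (x m))) atTop
      (𝓝 (dist (beta f hf ε hε x hx) (g f hf ε hε m (x m)))) :=
    (beta_tendsto f hf ε hε x hx).dist tendsto_const_nhds
  refine le_of_tendsto h1 (eventually_atTop.2 ⟨m, fun n hn => ?_⟩)
  have := estA f hf ε hε x hx m n hn
  have h2 := del_pos f hf ε hε n
  linarith

end Thread

noncomputable def v (a : X) (k n : ℕ) : X := (⇑f)^[n] ((g f hf ε hε (n+k)).symm a)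

lemma estB (a : X) (k : ℕ) : ∀ m n, m ≤ n →
    dist (v f hf ε hε a k n) (v f hf ε hε a k m) ≤ del f hf ε hε (m+k) - del f hf ε hε (n+k) := by
  intro m n h
  induction n, h using Nat.le_induction with
  | base => simp
  | succ n hn ih =>
    have step : dist (v f hf ε hε a k (n+1)) (v f hf ε hε a k n) ≤ del f hf ε hε (n+k) / 2 := by
      set z := (g f hf ε hε ((n+k)+1)).symm a with hz
      have h1 : v f hf ε hε a k (n+1) = (⇑f)^[n] (f z) := by
        have : (n+1)+k = (n+k)+1 := by omega
        rw [v, this, Function.iterate_succ_apply]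
      have h2 : v f hf ε hε a k n = (⇑f)^[n] (E f hf ε hε (n+k) z) := by
        rw [v, hz, g_succ_symm]
        congr 1
        exact (Homeomorph.apply_symm_apply _ _).symm
      rw [h1, h2]
      have h3 : dist (f z) (E f hf ε hε (n+k) z) ≤ del f hf ε hε ((n+k)+1) := by
        rw [dist_comm]; exact hE f hf ε hε (n+k) z
      have := hW f hf ε hε (n+k) n (n+k) (n+k) (Nat.le_add_right n k) le_rfl le_rfl _ _ h3
      simpa [Homeomorph.symm_apply_apply] using this
    have h4 := del_succ f hf ε hε (n+k)
    have h5 : (n+1)+k = (n+k)+1 := by omega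
    rw [h5]
    calc dist (v f hf ε hε a k (n+1)) (v f hf ε hε a k m)
        ≤ dist (v f hf ε hε a k (n+1)) (v f hf ε hε a k n)
          + dist (v f hf ε hε a k n) (v f hf ε hε a k m) := dist_triangle _ _ _
      _ ≤ del f hf ε hε (m+k) - del f hf ε hε ((n+k)+1) := by
          have h6 : (n+1)+k = (n+k)+1 := by omega
          rw [h6] at *
          linarith

lemma cauchyB (a : X) (k : ℕ) : CauchySeq (v f hf ε hε a k) := by
  refine cauchySeq_of_le_tendsto_0 (fun N => del f hf ε hε (N+k)) (fun n m N hn hm => ?_) ?_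
  · rcases le_total n m with h | h
    · rw [dist_comm]
      have := estB f hf ε hε a k n m h
      have h2 := del_pos f hf ε hε (m+k)
      have h3 := del_anti f hf ε hε (show N+k ≤ n+k by omega)
      linarith
    · have := estB f hf ε hε a k m n h
      have h2 := del_pos f hf ε hε (n+k)
      have h3 := del_anti f hf ε hε (show N+k ≤ m+k by omega)
      linarith
  · exact (del_tendsto f hf ε hε).comp (tendsto_atTop_atTop_of_monotone
      (fun i j h => by omega) (fun b => ⟨b, by omega⟩))

noncomputable def gamma0 (a : X) (k : ℕ) : X :=
  (cauchySeq_tendsto_of_complete (cauchyB f hf ε hε a k)).choose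

lemma gamma0_tendsto (a : X) (k : ℕ) :
    Tendsto (v f hf ε hε a k) atTop (𝓝 (gamma0 f hf ε hε a k)) :=
  (cauchySeq_tendsto_of_complete (cauchyB f hf ε hε a k)).choose_spec

lemma gamma0_mem (a : X) (k : ℕ) : f (gamma0 f hf ε hε a (k+1)) = gamma0 f hf ε hε a k := by
  have h1 : Tendsto (fun n => f (v f hf ε hε a (k+1) n)) atTop
      (𝓝 (f (gamma0 f hf ε hε a (k+1)))) :=
    (f.continuous.tendsto _).comp (gamma0_tendsto f hf ε hε a (k+1))
  have h2 : ∀ n, f (v f hf ε hε a (k+1) n) = v f hf ε hε a k (n+1) := by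
    intro n
    have h3 : n+(k+1) = (n+1)+k := by omega
    rw [v, v, h3]
    exact (Function.iterate_succ_apply' _ _ _).symm
  have h4 : Tendsto (fun n => v f hf ε hε a k (n+1)) atTop (𝓝 (gamma0 f hf ε hε a k)) :=
    (gamma0_tendsto f hf ε hε a k).comp (tendsto_add_atTop_nat 1)
  rw [funext h2] at h1
  exact tendsto_nhds_unique h1 h4

lemma estC : ∀ n m (a : X),
    dist (g f hf ε hε m ((⇑f)^[n] ((g f hf ε hε (n+m)).symm a))) a
      ≤ del f hf ε hε m - del f hf ε hε (n+m) := by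
  intro n
  induction n with
  | zero => intro m a; simp
  | succ n ih =>
    intro m a
    set w := (g f hf ε hε ((n+1)+m)).symm a with hw
    have key : (⇑f)^[n+1] w = f ((⇑f)^[n] w) := Function.iterate_succ_apply' _ _ _
    have step : dist (g f hf ε hε m (f ((⇑f)^[n] w)))
        (g f hf ε hε (m+1) ((⇑f)^[n] w)) ≤ del f hf ε hε m / 2 := by
      have h1 : g f hf ε hε (m+1) ((⇑f)^[n] w) = g f hf ε hε m (E f hf ε hε m ((⇑f)^[n] w)) :=
        g_succ f hf ε hε m _
      rw [h1]
      have h3 : dist (f ((⇑f)^[n] w)) (E f hf ε hε m ((⇑f)^[n] w)) ≤ del f hf ε hε (m+1) := by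
        rw [dist_comm]; exact hE f hf ε hε m _
      have := hW f hf ε hε m 0 0 m (Nat.zero_le m) (Nat.zero_le m) le_rfl _ _ h3
      simpa [g_zero] using this
    have ihm : dist (g f hf ε hε (m+1) ((⇑f)^[n] ((g f hf ε hε (n+(m+1))).symm a))) a
        ≤ del f hf ε hε (m+1) - del f hf ε hε (n+(m+1)) := ih (m+1) a
    have hidx : n+(m+1) = (n+1)+m := by omega
    rw [hidx] at ihm
    have h4 := del_succ f hf ε hε m
    calc dist (g f hf ε hε m ((⇑f)^[n+1] w)) a
        ≤ dist (g f hf ε hε m ((⇑f)^[n+1] w)) (g f hf ε hε (m+1) ((⇑f)^[n] w))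
          + dist (g f hf ε hε (m+1) ((⇑f)^[n] w)) a := dist_triangle _ _ _
      _ ≤ del f hf ε hε m - del f hf ε hε ((n+1)+m) := by
          rw [key]
          have h5 : (n+1)+m = m + (n+1) := by omega
          have h6 : del f hf ε hε ((n+1)+m) ≤ del f hf ε hε (m+1) := by
            exact del_anti f hf ε hε (by omega)
          linarith [step, ihm]

section Thread2

variable (x : ℕ → X) (hx : ∀ i, f (x (i+1)) = x i)

include hx

omit [CompactSpace X] in
lemma thread_iter : ∀ n k, (⇑f)^[n] (x (n+k)) = x k := by
  intro n
  induction n with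
  | zero => intro k; simp
  | succ n ih =>
    intro k
    have h1 : (n+1)+k = (n+k)+1 := by omega
    rw [h1, Function.iterate_succ_apply, hx (n+k), ih k]

lemma estD : ∀ n k m, n + k ≤ m →
    dist ((⇑f)^[n] ((g f hf ε hε (n+k)).symm (g f hf ε hε m (x m)))) (x k)
      ≤ del f hf ε hε (n+k) - del f hf ε hε m := by
  intro n k m h
  induction m, h using Nat.le_induction with
  | base =>
    rw [Homeomorph.symm_apply_apply, thread_iter f x hx n k]
    simp
  | succ m hm ih =>
    have step : dist ((⇑f)^[n] ((g f hf ε hε (n+k)).symm (g f hf ε hε (m+1) (x (m+1)))))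
        ((⇑f)^[n] ((g f hf ε hε (n+k)).symm (g f hf ε hε m (x m)))) ≤ del f hf ε hε m / 2 := by
      have h1 : g f hf ε hε (m+1) (x (m+1)) = g f hf ε hε m (E f hf ε hε m (x (m+1))) :=
        g_succ f hf ε hε m _
      have h2 : x m = f (x (m+1)) := (hx m).symm
      rw [h1, h2]
      have h3 : dist (E f hf ε hε m (x (m+1))) (f (x (m+1))) ≤ del f hf ε hε (m+1) :=
        hE f hf ε hε m _
      exact hW f hf ε hε m n (n+k) m (by omega) hm le_rfl _ _ h3
    have h4 := del_succ f hf ε hε m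
    calc dist ((⇑f)^[n] ((g f hf ε hε (n+k)).symm (g f hf ε hε (m+1) (x (m+1))))) (x k)
        ≤ dist ((⇑f)^[n] ((g f hf ε hε (n+k)).symm (g f hf ε hε (m+1) (x (m+1)))))
            ((⇑f)^[n] ((g f hf ε hε (n+k)).symm (g f hf ε hε m (x m))))
          + dist ((⇑f)^[n] ((g f hf ε hε (n+k)).symm (g f hf ε hε m (x m)))) (x k) :=
          dist_triangle _ _ _
      _ ≤ del f hf ε hε (n+k) - del f hf ε hε (m+1) := by linarith

end Thread2


lemma left_inv_coord (x : ℕ → X) (hx : ∀ i, f (x (i+1)) = x i) (k : ℕ) :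
    gamma0 f hf ε hε (beta f hf ε hε x hx) k = x k := by
  have hb := beta_tendsto f hf ε hε x hx
  have hbnd : ∀ n, dist (v f hf ε hε (beta f hf ε hε x hx) k n) (x k)
      ≤ del f hf ε hε (n+k) := by
    intro n
    have hcont : Continuous fun y : X => (⇑f)^[n] ((g f hf ε hε (n+k)).symm y) :=
      (f.continuous.iterate n).comp (g f hf ε hε (n+k)).symm.continuous
    have h1 : Tendsto (fun m => (⇑f)^[n] ((g f hf ε hε (n+k)).symm (g f hf ε hε m (x m))))
        atTop (𝓝 ((⇑f)^[n] ((g f hf ε hε (n+k)).symm (beta f hf ε hε x hx)))) :=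
      (hcont.tendsto _).comp hb
    have h2 := h1.dist (tendsto_const_nhds (x := x k))
    refine le_of_tendsto h2 (eventually_atTop.2 ⟨n+k, fun m hm => ?_⟩)
    have h3 := estD f hf ε hε x hx n k m hm
    have h4 := del_pos f hf ε hε m
    linarith
  have hshift : Tendsto (fun n => del f hf ε hε (n+k)) atTop (𝓝 0) :=
    (del_tendsto f hf ε hε).comp (tendsto_add_atTop_nat k)
  have h3 : Tendsto (v f hf ε hε (beta f hf ε hε x hx) k) atTop (𝓝 (x k)) := by
    rw [tendsto_iff_dist_tendsto_zero]
    exact squeeze_zero (fun n => dist_nonneg) hbnd hshift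
  exact tendsto_nhds_unique (gamma0_tendsto f hf ε hε _ k) h3

lemma right_inv_pt (a : X) :
    beta f hf ε hε (gamma0 f hf ε hε a) (gamma0_mem f hf ε hε a) = a := by
  have hs : ∀ m, dist (g f hf ε hε m (gamma0 f hf ε hε a m)) a ≤ del f hf ε hε m := by
    intro m
    have h1 : Tendsto (fun n => g f hf ε hε m (v f hf ε hε a m n)) atTop
        (𝓝 (g f hf ε hε m (gamma0 f hf ε hε a m))) :=
      ((g f hf ε hε m).continuous.tendsto _).comp (gamma0_tendsto f hf ε hε a m)
    have h2 := h1.dist (tendsto_const_nhds (x := a))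
    refine le_of_tendsto h2 (eventually_atTop.2 ⟨0, fun n _ => ?_⟩)
    have h3 := estC f hf ε hε n m a
    have h4 := del_pos f hf ε hε (n+m)
    exact h3.trans (by linarith)
  have h3 : Tendsto (fun m => g f hf ε hε m (gamma0 f hf ε hε a m)) atTop (𝓝 a) := by
    rw [tendsto_iff_dist_tendsto_zero]
    exact squeeze_zero (fun n => dist_nonneg) hs (del_tendsto f hf ε hε)
  exact tendsto_nhds_unique (beta_tendsto f hf ε hε _ (gamma0_mem f hf ε hε a)) h3

end BrownCtrl

open BrownCtrl Filter Topology

/-- Brown's theorem with control: if `f : X → X` is a near-homeomorphism of a compact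
metric space `X`, then for every `ε > 0` there is a homeomorphism `β : lim(X,f) → X`
with `dist (β x) x₀ < ε` for all `x = (x₀,x₁,…) ∈ lim(X,f)`. In particular `lim(X,f)`
is homeomorphic to `X`. -/
theorem brown_theorem_with_control {X : Type*} [MetricSpace X] [CompactSpace X]
    (f : C(X, X)) (hf : f ∈ closure {g : C(X, X) | ∃ e : X ≃ₜ X, ⇑e = ⇑g})
    (ε : ℝ) (hε : 0 < ε) :
    (∃ β : InvLim ⇑f ≃ₜ X, ∀ x : InvLim ⇑f, dist (β x) (x.val 0) < ε) ∧
    Nonempty (InvLim ⇑f ≃ₜ X) := by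
  classical
  have hclosed : IsClosed (InvLim ⇑f) := by
    have h1 : InvLim ⇑f = ⋂ i, {x : ℕ → X | f (x (i+1)) = x i} := by
      ext x; simp [InvLim, Set.mem_iInter]
    rw [h1]
    exact isClosed_iInter fun i =>
      isClosed_eq (f.continuous.comp (continuous_apply (i+1))) (continuous_apply i)
  haveI : CompactSpace (InvLim ⇑f) := isCompact_iff_compactSpace.mp hclosed.isCompact
  let B : InvLim ⇑f → X := fun x => beta f hf ε hε x.1 x.2
  let Eqv : InvLim ⇑f ≃ X :=
    { toFun := B
      invFun := fun a => ⟨fun k => gamma0 f hf ε hε a k, fun i => gamma0_mem f hf ε hε a i⟩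
      left_inv := fun x => Subtype.ext (funext fun k => left_inv_coord f hf ε hε x.1 x.2 k)
      right_inv := fun a => right_inv_pt f hf ε hε a }
  have hBcont : Continuous B := by
    refine TendstoUniformly.continuous
      (F := fun n (x : InvLim ⇑f) => g f hf ε hε n (x.1 n)) (p := atTop) ?_
      (Frequently.of_forall fun n =>
        (g f hf ε hε n).continuous.comp ((continuous_apply n).comp continuous_subtype_val))
    rw [Metric.tendstoUniformly_iff]
    intro t ht
    have hev : ∀ᶠ n in atTop, del f hf ε hε n < t :=
      (del_tendsto f hf ε hε).eventually (gt_mem_nhds ht)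
    filter_upwards [hev] with n hn x
    exact lt_of_le_of_lt (dist_beta_g f hf ε hε x.1 x.2 n) hn
  let H : InvLim ⇑f ≃ₜ X := Continuous.homeoOfEquivCompactToT2 (f := Eqv) hBcont
  refine ⟨⟨H, fun x => ?_⟩, ⟨H⟩⟩
  have h1 : dist (beta f hf ε hε x.1 x.2) (g f hf ε hε 0 (x.1 0)) ≤ del f hf ε hε 0 :=
    dist_beta_g f hf ε hε x.1 x.2 0
  have h2 : g f hf ε hε 0 (x.1 0) = x.1 0 := by rw [g_zero]; rfl
  have h3 : del f hf ε hε 0 = ε/2 := del_zero f hf ε hε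
  have : H x = beta f hf ε hε x.1 x.2 := rfl
  rw [this]
  rw [h2, h3] at h1
  linarith
end
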